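/- arXiv:1212.5505 — 3 statements merged into one kernel-verified Lean document; each statement's English description precedes it below -/
import Mathlib

section
/- Conditional Kalikow-type decomposition. Assume sup_i ∑_j |W_{j→i}| < ∞, the uniform Lipschitz condition on φ with constant γ, φ_i(s,n) ≥ δ > 0 for all i, s, n, and G(n) < ∞ for every n. Fix ξ as in the context and fix (i,t) with ξ_t(i) = 0. Then λ_{(i,t)}(k) ∈ [0,1] for all k ≥ −1, ∑_{k≥−1} λ_{(i,t)}(k) = 1, and there exists a family of conditional probabilities (p_{(i,t)}^{[k]}(a|x))_{k≥0} satisfying: (1) for each a and k ≥ 0, the map S^ξ ∋ x ↦ p_{(i,t)}^{[k]}(a|x) depends only on the variables (x_s(j) : L_t^i(x) ≤ s ≤ t−1, j ∈ V_i(k)); (2) for all x ∈ S^ξ and k ≥ 0, p_{(i,t)}^{[k]}(1|x) ∈ [0,1] and p_{(i,t)}^{[k]}(0|x) + p_{(i,t)}^{[k]}(1|x) = 1; (3) for all x ∈ S^ξ and a ∈ {0,1}, p_{(i,t)}(a|x) = λ_{(i,t)}(−1)·p_{(i,t)}^{[−1]}(a) + ∑_{k≥0} λ_{(i,t)}(k)·p_{(i,t)}^{[k]}(a|x),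 where p_{(i,t)}^{[−1]}(a) = r_{(i,t)}^{[−1]}(a)/λ_{(i,t)}(−1). -/
open MeasureTheory Filter Set
open scoped ENNReal

noncomputable section

namespace NeuronSys

variable {I : Type*}

/-- The accumulated, weighted spiking activity felt by neuron `i` at time `t`:
`∑_j W_{j→i} ∑_{s = L_t^i}^{t-1} g_j(t-s) x_s(j)`, where the inner sum ranges over
those `s < t` such that neuron `i` has no spike strictly between `s` and `t`
(equivalently `L_t^i(x) ≤ s ≤ t-1`; if `i` never spiked before `t`, over all `s < t`). -/
noncomputable def pot (W : I → I → ℝ) (g : I → ℕ → ℝ) (i : I) (t : ℤ)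
    (x : ℤ → I → Bool) : ℝ :=
  ∑' (j : I) (s : ℤ),
    if s < t ∧ (∀ u : ℤ, s < u → u < t → x u i = false) ∧ x s j = true
    then W j i * g j (t - s).toNat else 0

/-- The last spike time `L_t^i(x) = sup {s < t : x_s(i) = 1}` (junk value if no spike). -/
noncomputable def lastSpike (x : ℤ → I → Bool) (i : I) (t : ℤ) : ℤ :=
  sSup {s : ℤ | s < t ∧ x s i = true}

/-- The spiking probability of neuron `i` at time `t` given the past `x`, for a spiking
rate `φ_i(s, n)` depending also on the time `n = t - L_t^i` elapsed since the last spike. -/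
noncomputable def spikeP (φ : I → ℝ → ℕ → ℝ) (W : I → I → ℝ) (g : I → ℕ → ℝ)
    (i : I) (t : ℤ) (x : ℤ → I → Bool) : ℝ :=
  φ i (pot W g i t x) (t - lastSpike x i t).toNat

/-- The filtration `F_t = σ(X_s(j) : j ∈ I, s ≤ t)` on `{0,1}^{I × ℤ}`. -/
def filt (I : Type*) (t : ℤ) : MeasurableSpace (ℤ → I → Bool) :=
  MeasurableSpace.comap (fun x (p : {s : ℤ // s ≤ t} × I) => x p.1.1 p.2)
    MeasurableSpace.pi

/-- `P` is compatible with the dynamics: conditionally on `F_{t-1}` the coordinates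
`(X_t(i))_{i∈I}` are independent, with `P(X_t(i) = 1 | F_{t-1}) = φ_i(potential, t - L_t^i)`. -/
def Compatible (φ : I → ℝ → ℕ → ℝ) (W : I → I → ℝ) (g : I → ℕ → ℝ)
    (P : Measure (ℤ → I → Bool)) : Prop :=
  ∀ (t : ℤ) (J : Finset I) (a : I → Bool),
    (P[(fun x => ∏ i ∈ J, (if x t i = a i then (1:ℝ) else 0)) | filt I (t-1)])
      =ᵐ[P] (fun x => ∏ i ∈ J,
        (if a i then spikeP φ W g i t x else 1 - spikeP φ W g i t x))

/-- `G(n) = sup_i ∑_{m=1}^n g_i(m)`, as an extended real. -/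
noncomputable def Gfun (g : I → ℕ → ℝ) (n : ℕ) : ℝ≥0∞ :=
  ⨆ i : I, ∑ m ∈ Finset.Icc 1 n, ENNReal.ofReal (g i m)

end NeuronSys

namespace NeuronSys

variable {I : Type*}

/-- Spiking probability when the rate `φ_i(s)` does not depend on the elapsed time. -/
noncomputable def spikePS (φ : I → ℝ → ℝ) (W : I → I → ℝ) (g : I → ℕ → ℝ)
    (i : I) (t : ℤ) (x : ℤ → I → Bool) : ℝ :=
  φ i (pot W g i t x)

/-- Compatibility of `P` with the dynamics when `φ_i(s)` does not depend on
the elapsed time since the last spike. -/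
def CompatibleS (φ : I → ℝ → ℝ) (W : I → I → ℝ) (g : I → ℕ → ℝ)
    (P : Measure (ℤ → I → Bool)) : Prop :=
  ∀ (t : ℤ) (J : Finset I) (a : I → Bool),
    (P[(fun x => ∏ i ∈ J, (if x t i = a i then (1:ℝ) else 0)) | filt I (t-1)])
      =ᵐ[P] (fun x => ∏ i ∈ J,
        (if a i then spikePS φ W g i t x else 1 - spikePS φ W g i t x))

end NeuronSys

namespace NeuronSys

variable {I : Type*}

/-- The set `S^ξ` of configurations compatible with the spontaneous spikes `ξ`. -/
def Sxi (ξ : ℤ → I → Bool) : Set (ℤ → I → Bool) := {x | ∀ i t, ξ t i = true → x t i = true}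

/-- `R_t^i = sup {s < t : ξ_s(i) = 1}`, the last spontaneous spike time before `t`. -/
noncomputable def lastXi (ξ : ℤ → I → Bool) (i : I) (t : ℤ) : ℤ :=
  sSup {s : ℤ | s < t ∧ ξ s i = true}

/-- `p_{(i,t)}(a|x)`: probability that neuron `i` takes value `a` at time `t` given
the past configuration `x`. -/
noncomputable def pcond (φ : I → ℝ → ℕ → ℝ) (W : I → I → ℝ) (g : I → ℕ → ℝ)
    (i : I) (t : ℤ) (a : Bool) (x : ℤ → I → Bool) : ℝ :=
  if a then spikeP φ W g i t x else 1 - spikeP φ W g i t x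

/-- `r_{(i,t)}^{[-1]}(a) = inf {p_{(i,t)}(a|z) : z ∈ S^ξ}`. -/
noncomputable def rneg (φ : I → ℝ → ℕ → ℝ) (W : I → I → ℝ) (g : I → ℕ → ℝ)
    (ξ : ℤ → I → Bool) (i : I) (t : ℤ) (a : Bool) : ℝ :=
  sInf ((fun z => pcond φ W g i t a z) '' Sxi ξ)

/-- `r_{(i,t)}^{[k]}(a|x) = inf {p_{(i,t)}(a|z) : z ∈ S^ξ, z = x on V_i(k) × [L_t^i(x), t-1]}`. -/
noncomputable def rk (φ : I → ℝ → ℕ → ℝ) (W : I → I → ℝ) (g : I → ℕ → ℝ)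
    (ξ : ℤ → I → Bool) (V : I → ℕ → Finset I)
    (i : I) (t : ℤ) (k : ℕ) (a : Bool) (x : ℤ → I → Bool) : ℝ :=
  sInf {v | ∃ z ∈ Sxi ξ,
    (∀ j ∈ V i k, ∀ s : ℤ, lastSpike x i t ≤ s → s < t → z s j = x s j) ∧
    v = pcond φ W g i t a z}

/-- `λ_{(i,t)}(-1) = α_{(i,t)}(-1) = r^{[-1]}(1) + r^{[-1]}(0)`. -/
noncomputable def lamNeg (φ : I → ℝ → ℕ → ℝ) (W : I → I → ℝ) (g : I → ℕ → ℝ)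
    (ξ : ℤ → I → Bool) (i : I) (t : ℤ) : ℝ :=
  rneg φ W g ξ i t true + rneg φ W g ξ i t false

/-- `α_{(i,t)}(k) = inf_{x ∈ S^ξ} (r^{[k]}(1|x) + r^{[k]}(0|x))`. -/
noncomputable def alp (φ : I → ℝ → ℕ → ℝ) (W : I → I → ℝ) (g : I → ℕ → ℝ)
    (ξ : ℤ → I → Bool) (V : I → ℕ → Finset I) (i : I) (t : ℤ) (k : ℕ) : ℝ :=
  sInf ((fun x => rk φ W g ξ V i t k true x + rk φ W g ξ V i t k false x) '' Sxi ξ)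

/-- `λ_{(i,t)}(k) = α_{(i,t)}(k) - α_{(i,t)}(k-1)` for `k ≥ 0`. -/
noncomputable def lam (φ : I → ℝ → ℕ → ℝ) (W : I → I → ℝ) (g : I → ℕ → ℝ)
    (ξ : ℤ → I → Bool) (V : I → ℕ → Finset I) (i : I) (t : ℤ) : ℕ → ℝ
  | 0 => alp φ W g ξ V i t 0 - lamNeg φ W g ξ i t
  | k + 1 => alp φ W g ξ V i t (k + 1) - alp φ W g ξ V i t k

end NeuronSys

namespace NeuronSys

variable {I : Type*}

open scoped Classical in
/-- Cumulative `0`-mass allocated by stage `k` in the Kalikow decomposition. -/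
noncomputable def kalC (φ : I → ℝ → ℕ → ℝ) (W : I → I → ℝ) (g : I → ℕ → ℝ)
    (ξ : ℤ → I → Bool) (V : I → ℕ → Finset I) (i : I) (t : ℤ) :
    ℕ → (ℤ → I → Bool) → ℝ
  | 0, x => min (rk φ W g ξ V i t 0 false x - rneg φ W g ξ i t false)
      (lam φ W g ξ V i t 0)
  | (k+1), x => min (rk φ W g ξ V i t (k+1) false x - rneg φ W g ξ i t false)
      (kalC φ W g ξ V i t k x + lam φ W g ξ V i t (k+1))

/-- Increment of the cumulative `0`-mass. -/
noncomputable def kalD (φ : I → ℝ → ℕ → ℝ) (W : I → I → ℝ) (g : I → ℕ → ℝ)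
    (ξ : ℤ → I → Bool) (V : I → ℕ → Finset I) (i : I) (t : ℤ) :
    ℕ → (ℤ → I → Bool) → ℝ
  | 0, x => kalC φ W g ξ V i t 0 x
  | (k+1), x => kalC φ W g ξ V i t (k+1) x - kalC φ W g ξ V i t k x

open scoped Classical in
/-- The conditional probabilities of the Kalikow decomposition. -/
noncomputable def kalP (φ : I → ℝ → ℕ → ℝ) (W : I → I → ℝ) (g : I → ℕ → ℝ)
    (ξ : ℤ → I → Bool) (V : I → ℕ → Finset I) (i : I) (t : ℤ)
    (k : ℕ) (a : Bool) (x : ℤ → I → Bool) : ℝ :=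
  if lam φ W g ξ V i t k = 0 then 2⁻¹
  else if a then 1 - kalD φ W g ξ V i t k x / lam φ W g ξ V i t k
  else kalD φ W g ξ V i t k x / lam φ W g ξ V i t k

end NeuronSys


open NeuronSys

/-- **Proposition 1 (Conditional Kalikow-type decomposition in random environment).**
Fix an environment `ξ` of spontaneous spikes and `(i,t)` with `ξ_t(i) = 0`. Then the
weights `λ_{(i,t)}(k)`, `k ≥ -1`, lie in `[0,1]` and sum to `1`, and there is a family of
conditional probabilities `(p^{[k]}_{(i,t)}(a|·))_{k≥0}` such that `p^{[k]}(a|x)` depends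
only on `(x_s(j) : L_t^i(x) ≤ s ≤ t-1, j ∈ V_i(k))`, is a probability in `a`, and
`p_{(i,t)}(a|x) = λ(-1) p^{[-1]}(a) + ∑_{k≥0} λ(k) p^{[k]}(a|x)` on `S^ξ`, with
`p^{[-1]}(a) = r^{[-1]}(a)/λ(-1)`. -/
theorem conditional_kalikow_decomposition
    {I : Type*} [Countable I] [Nonempty I]
    (W : I → I → ℝ) (g : I → ℕ → ℝ) (V : I → ℕ → Finset I)
    (γ δ : ℝ) (φ : I → ℝ → ℕ → ℝ) (ξ : ℤ → I → Bool)
    (hWdiag : ∀ j, W j j = 0)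
    (hgpos : ∀ j n, 0 ≤ g j n)
    (hγ : 0 < γ) (hδ : 0 < δ)
    (hWsum : (⨆ i : I, ∑' j : I, ENNReal.ofReal |W j i|) < ⊤)
    (hV0 : ∀ i, V i 0 = {i})
    (hVmono : ∀ i, Monotone (V i))
    (hVunion : ∀ i, (⋃ k, (V i k : Set I)) = {j | j ≠ i ∧ W j i ≠ 0} ∪ {i})
    (hφrange : ∀ i s n, φ i s n ∈ Set.Icc (0:ℝ) 1)
    (hφLip : ∀ i s s' n, |φ i s n - φ i s' n| ≤ γ * |s - s'|)
    (hφδ : ∀ i s n, δ ≤ φ i s n)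
    (hG : ∀ n, Gfun g n < ⊤)
    -- the environment has spontaneous spikes arbitrarily far in the past
    (hξ : ∀ (i : I) (t : ℤ), ∃ s : ℤ, s < t ∧ ξ s i = true)
    (i : I) (t : ℤ) (hit : ξ t i = false) :
    lamNeg φ W g ξ i t ∈ Set.Icc (0:ℝ) 1 ∧
    (∀ k : ℕ, lam φ W g ξ V i t k ∈ Set.Icc (0:ℝ) 1) ∧
    lamNeg φ W g ξ i t + ∑' k : ℕ, lam φ W g ξ V i t k = 1 ∧
    ∃ p : ℕ → Bool → (ℤ → I → Bool) → ℝ,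
      -- (1) p^{[k]}(a|·) depends only on (x_s(j) : L_t^i(x) ≤ s ≤ t-1, j ∈ V_i(k))
      (∀ (k : ℕ) (a : Bool), ∀ x ∈ Sxi ξ, ∀ y ∈ Sxi ξ,
        (∀ j ∈ V i k, ∀ s : ℤ, lastSpike x i t ≤ s → s < t → x s j = y s j) →
        p k a x = p k a y) ∧
      -- (2) p^{[k]}(·|x) is a probability on {0,1}
      (∀ (k : ℕ), ∀ x ∈ Sxi ξ,
        p k true x ∈ Set.Icc (0:ℝ) 1 ∧ p k false x + p k true x = 1) ∧
      -- (3) the convex decomposition of p_{(i,t)}(a|x)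
      (∀ x ∈ Sxi ξ, ∀ a : Bool,
        pcond φ W g i t a x
          = lamNeg φ W g ξ i t * (rneg φ W g ξ i t a / lamNeg φ W g ξ i t)
            + ∑' k : ℕ, lam φ W g ξ V i t k * p k a x) := by
  classical
  -- basic facts about pcond
  have hpc0 : ∀ (a : Bool) x, 0 ≤ pcond φ W g i t a x := by
    intro a x; cases a
    · have := (hφrange i (pot W g i t x) (t - lastSpike x i t).toNat).2
      simp only [pcond, spikeP, Bool.false_eq_true, if_false]; linarith
    · have := (hφrange i (pot W g i t x) (t - lastSpike x i t).toNat).1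
      simpa [pcond, spikeP] using this
  have hpc1 : ∀ (a : Bool) x, pcond φ W g i t a x ≤ 1 := by
    intro a x; cases a
    · have := (hφrange i (pot W g i t x) (t - lastSpike x i t).toNat).1
      simp only [pcond, spikeP, Bool.false_eq_true, if_false]; linarith
    · have := (hφrange i (pot W g i t x) (t - lastSpike x i t).toNat).2
      simpa [pcond, spikeP] using this
  have hpcsum : ∀ x, pcond φ W g i t true x + pcond φ W g i t false x = 1 := by
    intro x; simp only [pcond, if_true, Bool.false_eq_true, if_false]; ring
  -- the last environment spike R
  set R := lastXi ξ i t with hRdef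
  have hRspec : R < t ∧ ξ R i = true := by
    obtain ⟨s, hs1, hs2⟩ := hξ i t
    have hmem := Int.csSup_mem (s := {u : ℤ | u < t ∧ ξ u i = true})
      ⟨s, hs1, hs2⟩ ⟨t, fun u hu => le_of_lt hu.1⟩
    exact hmem
  -- the last spike of a configuration in Sxi
  have hLspec : ∀ x ∈ Sxi ξ, R ≤ lastSpike x i t ∧ lastSpike x i t < t ∧
      x (lastSpike x i t) i = true ∧ ∀ s, s < t → x s i = true → s ≤ lastSpike x i t := by
    intro x hx
    have hmemR : R ∈ {s : ℤ | s < t ∧ x s i = true} := ⟨hRspec.1, hx i R hRspec.2⟩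
    have hbdd : BddAbove {s : ℤ | s < t ∧ x s i = true} := ⟨t, fun s hs => le_of_lt hs.1⟩
    have hmem := Int.csSup_mem ⟨R, hmemR⟩ hbdd
    exact ⟨le_csSup hbdd hmemR, hmem.1, hmem.2, fun s hs hxs => le_csSup hbdd ⟨hs, hxs⟩⟩
  have hnospike : ∀ x ∈ Sxi ξ, ∀ u, lastSpike x i t < u → u < t → x u i = false := by
    intro x hx u hu hut
    obtain ⟨-, -, -, hmax⟩ := hLspec x hx
    by_contra h
    have : x u i = true := by
      cases hxu : x u i
      · exact absurd hxu h
      · rfl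
    exact absurd (hmax u hut this) (not_le.mpr hu)
  have hLeq : ∀ x ∈ Sxi ξ, ∀ y ∈ Sxi ξ,
      (∀ s, lastSpike x i t ≤ s → s < t → y s i = x s i) →
      lastSpike y i t = lastSpike x i t := by
    intro x hx y hy hagree
    obtain ⟨-, hLt, hLtrue, hmax⟩ := hLspec x hx
    obtain ⟨-, hLt', hLtrue', hmax'⟩ := hLspec y hy
    have h1 : lastSpike x i t ≤ lastSpike y i t :=
      hmax' _ hLt (by rw [hagree _ le_rfl hLt]; exact hLtrue)
    rcases eq_or_lt_of_le h1 with h | h2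
    · exact h.symm
    · have hxv : x (lastSpike y i t) i = true := by
        rw [← hagree _ (le_of_lt h2) hLt']; exact hLtrue'
      exact absurd (hmax _ hLt' hxv) (not_le.mpr h2)
  -- the constant GN
  set N := (t - R).toNat with hN
  set GN := (Gfun g N).toReal with hGNdef
  have hGN0 : 0 ≤ GN := ENNReal.toReal_nonneg
  have hGle : ∀ j, ∑ m ∈ Finset.Icc 1 N, g j m ≤ GN := by
    intro j
    have h1 : (∑ m ∈ Finset.Icc 1 N, ENNReal.ofReal (g j m)) ≤ Gfun g N :=
      le_iSup (fun j => ∑ m ∈ Finset.Icc 1 N, ENNReal.ofReal (g j m)) j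
    have h2 : ∑ m ∈ Finset.Icc 1 N, g j m
        = (∑ m ∈ Finset.Icc 1 N, ENNReal.ofReal (g j m)).toReal := by
      rw [ENNReal.toReal_sum (fun m _ => ENNReal.ofReal_ne_top)]
      exact Finset.sum_congr rfl fun m _ => (ENNReal.toReal_ofReal (hgpos j m)).symm
    rw [h2]
    exact ENNReal.toReal_mono (hG N).ne h1
  -- summability of the weights
  set f : I → ℝ := fun j => |W j i| with hfdef
  have hf0 : ∀ j, 0 ≤ f j := fun j => abs_nonneg _
  have hfsum : Summable f := by
    have hne : ∑' j, ENNReal.ofReal |W j i| ≠ ⊤ :=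
      (lt_of_le_of_lt (le_iSup (fun i => ∑' j, ENNReal.ofReal |W j i|) i) hWsum).ne
    have h1 : Summable fun j => Real.toNNReal |W j i| :=
      ENNReal.tsum_coe_ne_top_iff_summable.mp hne
    have h2 : Summable fun j => ((Real.toNNReal |W j i| : NNReal) : ℝ) :=
      NNReal.summable_coe.mpr h1
    refine h2.congr fun j => ?_
    exact Real.coe_toNNReal _ (abs_nonneg _)
  -- the truncated potential sums
  set T : ℤ → I → (ℤ → I → Bool) → ℝ := fun L j x =>
    ∑ s ∈ Finset.Icc L (t-1), if x s j = true then W j i * g j (t - s).toNat else 0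
    with hTdef
  have hpot : ∀ x ∈ Sxi ξ, pot W g i t x = ∑' j, T (lastSpike x i t) j x := by
    intro x hx
    obtain ⟨hRL, hLt, hLtrue, hmax⟩ := hLspec x hx
    unfold pot
    refine tsum_congr fun j => ?_
    rw [tsum_eq_sum (s := Finset.Icc (lastSpike x i t) (t-1)) ?_]
    · refine Finset.sum_congr rfl fun s hs => ?_
      simp only [Finset.mem_Icc] at hs
      by_cases hxs : x s j = true
      · rw [if_pos hxs, if_pos]
        exact ⟨by omega, fun u hu hut => hnospike x hx u (lt_of_le_of_lt hs.1 hu) hut, hxs⟩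
      · rw [if_neg hxs, if_neg (fun hc => hxs hc.2.2)]
    · intro s hs
      simp only [Finset.mem_Icc, not_and_or, not_le] at hs
      apply if_neg
      rintro ⟨hst, hnos, hxs⟩
      rcases hs with hs | hs
      · have := hnos _ hs hLt
        rw [hLtrue] at this; exact Bool.true_eq_false.mp this
      · omega
  have hTbound : ∀ (L : ℤ), R ≤ L → ∀ j,
      (∑ s ∈ Finset.Icc L (t-1), |W j i| * g j (t - s).toNat) ≤ f j * GN := by
    intro L hRL j
    rw [← Finset.mul_sum]
    refine mul_le_mul_of_nonneg_left ?_ (abs_nonneg _)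
    calc ∑ s ∈ Finset.Icc L (t-1), g j (t-s).toNat
        = ∑ m ∈ (Finset.Icc L (t-1)).image (fun s => (t-s).toNat), g j m := by
          rw [Finset.sum_image]
          intro s hs y hy h
          simp only [Finset.coe_Icc, Set.mem_Icc, Finset.mem_Icc] at hs hy h
          omega
      _ ≤ ∑ m ∈ Finset.Icc 1 N, g j m := by
          refine Finset.sum_le_sum_of_subset_of_nonneg ?_ (fun m _ _ => hgpos j m)
          intro m hm
          simp only [Finset.mem_image, Finset.mem_Icc] at hm ⊢
          obtain ⟨s, ⟨h1, h2⟩, rfl⟩ := hm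
          omega
      _ ≤ GN := hGle j
  have hTabs : ∀ L, R ≤ L → ∀ j x, |T L j x| ≤ f j * GN := by
    intro L hRL j x
    refine (Finset.abs_sum_le_sum_abs _ _).trans ((Finset.sum_le_sum ?_).trans (hTbound L hRL j))
    intro s _
    by_cases h : x s j = true
    · rw [if_pos h, abs_mul, abs_of_nonneg (hgpos j _)]
    · rw [if_neg h, abs_zero]
      exact mul_nonneg (abs_nonneg _) (hgpos j _)
  have hTdiff : ∀ L, R ≤ L → ∀ j x z, |T L j z - T L j x| ≤ f j * GN := by
    intro L hRL j x z
    simp only [hTdef]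
    rw [← Finset.sum_sub_distrib]
    refine (Finset.abs_sum_le_sum_abs _ _).trans ((Finset.sum_le_sum ?_).trans (hTbound L hRL j))
    intro s _
    have habs : |W j i * g j (t-s).toNat| = |W j i| * g j (t-s).toNat := by
      rw [abs_mul, abs_of_nonneg (hgpos j _)]
    have hnn : 0 ≤ |W j i| * g j (t-s).toNat := mul_nonneg (abs_nonneg _) (hgpos j _)
    by_cases h1 : z s j = true <;> by_cases h2 : x s j = true <;>
      simp [h1, h2, habs, hnn]
  have hTsum : ∀ L, R ≤ L → ∀ x, Summable fun j => T L j x := by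
    intro L h x
    have hs : Summable fun j => f j * GN := hfsum.mul_right GN
    exact Summable.of_abs (hs.of_nonneg_of_le (fun j => abs_nonneg _) (fun j => hTabs L h j x))
  -- tails of the weight series
  set tail : ℕ → ℝ := fun k => ∑' j, if j ∈ V i k then 0 else f j with htaildef
  have htailsummand : ∀ k, Summable fun j => if j ∈ V i k then 0 else f j := by
    intro k
    refine hfsum.of_nonneg_of_le (fun j => ?_) (fun j => ?_)
    · by_cases h : j ∈ V i k <;> simp [h, hf0 j]
    · by_cases h : j ∈ V i k <;> simp [h, hf0 j]
  have htail0 : ∀ k, 0 ≤ tail k := by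
    intro k
    refine tsum_nonneg fun j => ?_
    by_cases h : j ∈ V i k <;> simp [h, hf0 j]
  have hiV : ∀ k, i ∈ V i k := by
    intro k
    refine hVmono i (Nat.zero_le k) ?_
    rw [hV0 i]; exact Finset.mem_singleton_self i
  -- tail tends to zero
  have htail_tendsto : Filter.Tendsto tail Filter.atTop (nhds 0) := by
    have htail_eq : ∀ k, tail k = (∑' j, f j) - ∑ j ∈ V i k, f j := by
      intro k
      have h1 : ∀ j, (if j ∈ V i k then 0 else f j) = f j - (if j ∈ V i k then f j else 0) := by
        intro j; by_cases h : j ∈ V i k <;> simp [h]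
      have h2 : Summable fun j => if j ∈ V i k then f j else 0 := by
        refine hfsum.of_nonneg_of_le (fun j => ?_) (fun j => ?_)
        · by_cases h : j ∈ V i k <;> simp [h, hf0 j]
        · by_cases h : j ∈ V i k <;> simp [h, hf0 j]
      have h3 : ∑' j, (if j ∈ V i k then f j else 0) = ∑ j ∈ V i k, f j := by
        rw [tsum_eq_sum (fun j hj => if_neg hj)]
        exact Finset.sum_congr rfl fun j hj => if_pos hj
      calc tail k = ∑' j, (f j - if j ∈ V i k then f j else 0) := tsum_congr h1
        _ = (∑' j, f j) - ∑' j, (if j ∈ V i k then f j else 0) := Summable.tsum_sub hfsum h2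
        _ = (∑' j, f j) - ∑ j ∈ V i k, f j := by rw [h3]
    have hVconv : Filter.Tendsto (fun k => ∑ j ∈ V i k, f j) Filter.atTop (nhds (∑' j, f j)) := by
      rw [Metric.tendsto_atTop]
      intro ε hε
      have hHS : Filter.Tendsto (fun s : Finset I => ∑ j ∈ s, f j) Filter.atTop
          (nhds (∑' j, f j)) := hfsum.hasSum
      obtain ⟨F, hF⟩ := Filter.eventually_atTop.mp (Metric.tendsto_nhds.mp hHS ε hε)
      have hcover : ∀ j ∈ F.filter (fun j => f j ≠ 0), ∃ k, j ∈ V i k := by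
        intro j hj
        rw [Finset.mem_filter] at hj
        by_cases hji : j = i
        · subst hji
          exact absurd (by simp [hfdef, hWdiag j]) hj.2
        · have hjW : W j i ≠ 0 := by
            intro h; exact hj.2 (by simp [hfdef, h])
          have : j ∈ ⋃ k, (V i k : Set I) := by
            rw [hVunion i]; exact Or.inl ⟨hji, hjW⟩
          simpa using this
      have hfind : ∀ (s : Finset I), (∀ j ∈ s, ∃ k, j ∈ V i k) → ∃ K, ∀ j ∈ s, j ∈ V i K := by
        intro s
        induction s using Finset.induction_on with
        | empty => exact fun _ => ⟨0, by simp⟩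
        | insert _ _ hnotmem ih =>
          rename_i a s
          intro hs
          obtain ⟨K1, hK1⟩ := ih fun j hj => hs j (Finset.mem_insert_of_mem hj)
          obtain ⟨k0, hk0⟩ := hs a (Finset.mem_insert_self a s)
          refine ⟨max k0 K1, fun j hj => ?_⟩
          rcases Finset.mem_insert.mp hj with rfl | hj
          · exact hVmono i (le_max_left k0 K1) hk0
          · exact hVmono i (le_max_right k0 K1) (hK1 j hj)
      obtain ⟨K, hK⟩ := hfind _ hcover
      refine ⟨K, fun k hk => ?_⟩
      have hsub : F ≤ V i k ∪ F := Finset.subset_union_right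
      have hd := hF (V i k ∪ F) hsub
      have heq : ∑ j ∈ V i k ∪ F, f j = ∑ j ∈ V i k, f j := by
        refine (Finset.sum_subset Finset.subset_union_left fun j hj hnj => ?_).symm
        by_contra hfj
        have hjf : j ∈ F.filter (fun j => f j ≠ 0) := by
          rw [Finset.mem_filter]
          refine ⟨?_, hfj⟩
          rcases Finset.mem_union.mp hj with h | h
          · exact absurd h hnj
          · exact h
        exact hnj (hVmono i hk (hK j hjf))
      rwa [heq] at hd
    have := hVconv.const_sub (∑' j, f j)
    simp only [sub_self] at this
    exact (funext htail_eq : tail = _) ▸ this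
  -- difference of potentials
  have hpotdiff : ∀ k, ∀ x ∈ Sxi ξ, ∀ z ∈ Sxi ξ,
      (∀ j ∈ V i k, ∀ s, lastSpike x i t ≤ s → s < t → z s j = x s j) →
      |pot W g i t z - pot W g i t x| ≤ tail k * GN := by
    intro k x hx z hz hag
    obtain ⟨hRL, hLt, -, -⟩ := hLspec x hx
    have hLz : lastSpike z i t = lastSpike x i t :=
      hLeq x hx z hz fun s h1 h2 => hag i (hiV k) s h1 h2
    rw [hpot z hz, hpot x hx, hLz,
      ← Summable.tsum_sub (hTsum _ hRL z) (hTsum _ hRL x)]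
    have hptle : ∀ j, |T (lastSpike x i t) j z - T (lastSpike x i t) j x|
        ≤ (if j ∈ V i k then 0 else f j) * GN := by
      intro j
      by_cases hj : j ∈ V i k
      · have heq : T (lastSpike x i t) j z = T (lastSpike x i t) j x := by
          refine Finset.sum_congr rfl fun s hs => ?_
          simp only [Finset.mem_Icc] at hs
          rw [hag j hj s hs.1 (by omega)]
        simp [hj, heq]
      · simpa [hj] using hTdiff _ hRL j x z
    have hsummand : Summable fun j => |T (lastSpike x i t) j z - T (lastSpike x i t) j x| := by
      refine Summable.of_nonneg_of_le (fun j => abs_nonneg _) hptle ?_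
      exact (htailsummand k).mul_right GN
    calc |∑' j, (T (lastSpike x i t) j z - T (lastSpike x i t) j x)|
        ≤ ∑' j, |T (lastSpike x i t) j z - T (lastSpike x i t) j x| := by
          simpa [Real.norm_eq_abs] using
            norm_tsum_le_tsum_norm (f := fun j => T (lastSpike x i t) j z - T (lastSpike x i t) j x)
              (by simpa [Real.norm_eq_abs] using hsummand)
      _ ≤ ∑' j, (if j ∈ V i k then 0 else f j) * GN :=
          Summable.tsum_le_tsum hptle hsummand ((htailsummand k).mul_right GN)
      _ = tail k * GN := tsum_mul_right
  -- difference of conditional probabilities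
  have hpcdiff : ∀ k (a : Bool), ∀ x ∈ Sxi ξ, ∀ z ∈ Sxi ξ,
      (∀ j ∈ V i k, ∀ s, lastSpike x i t ≤ s → s < t → z s j = x s j) →
      |pcond φ W g i t a z - pcond φ W g i t a x| ≤ γ * (tail k * GN) := by
    intro k a x hx z hz hag
    have hLz : lastSpike z i t = lastSpike x i t :=
      hLeq x hx z hz fun s h1 h2 => hag i (hiV k) s h1 h2
    have key : |spikeP φ W g i t z - spikeP φ W g i t x| ≤ γ * (tail k * GN) := by
      unfold spikeP
      rw [hLz]
      exact (hφLip i _ _ _).trans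
        (mul_le_mul_of_nonneg_left (hpotdiff k x hx z hz hag) (le_of_lt hγ))
    cases a
    · have heq : pcond φ W g i t false z - pcond φ W g i t false x
          = -(spikeP φ W g i t z - spikeP φ W g i t x) := by
        simp only [pcond, Bool.false_eq_true, if_false]; ring
      rw [heq, abs_neg]; exact key
    · simpa [pcond] using key
  -- the sets defining rk
  set SK : ℕ → (ℤ → I → Bool) → Bool → Set ℝ := fun k x a =>
    {v | ∃ z ∈ Sxi ξ,
      (∀ j ∈ V i k, ∀ s : ℤ, lastSpike x i t ≤ s → s < t → z s j = x s j) ∧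
      v = pcond φ W g i t a z} with hSKdef
  have hrk_eq : ∀ k a x, rk φ W g ξ V i t k a x = sInf (SK k x a) := fun _ _ _ => rfl
  have hSK_mem : ∀ k a x, x ∈ Sxi ξ → pcond φ W g i t a x ∈ SK k x a :=
    fun k a x hx => ⟨x, hx, fun _ _ _ _ _ => rfl, rfl⟩
  have hSK_bdd : ∀ k a x, BddBelow (SK k x a) := by
    intro k a x
    refine ⟨0, ?_⟩
    rintro v ⟨z, hz, -, rfl⟩
    exact hpc0 a z
  have hrk_le : ∀ k a, ∀ x ∈ Sxi ξ, rk φ W g ξ V i t k a x ≤ pcond φ W g i t a x :=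
    fun k a x hx => csInf_le (hSK_bdd k a x) (hSK_mem k a x hx)
  have hrk0 : ∀ k a, ∀ x ∈ Sxi ξ, 0 ≤ rk φ W g ξ V i t k a x := by
    intro k a x hx
    refine le_csInf ⟨_, hSK_mem k a x hx⟩ ?_
    rintro v ⟨z, hz, -, rfl⟩
    exact hpc0 a z
  have hrk_lb : ∀ k a, ∀ x ∈ Sxi ξ,
      pcond φ W g i t a x - γ * (tail k * GN) ≤ rk φ W g ξ V i t k a x := by
    intro k a x hx
    refine le_csInf ⟨_, hSK_mem k a x hx⟩ ?_
    rintro v ⟨z, hz, hag, rfl⟩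
    have hd := hpcdiff k a x hx z hz hag
    have := (abs_le.mp hd).1
    linarith
  have hrk_mono : ∀ a, ∀ x ∈ Sxi ξ, ∀ k k', k ≤ k' →
      rk φ W g ξ V i t k a x ≤ rk φ W g ξ V i t k' a x := by
    intro a x hx k k' hkk
    refine csInf_le_csInf (hSK_bdd k a x) ⟨_, hSK_mem k' a x hx⟩ ?_
    rintro v ⟨z, hz, hag, rfl⟩
    exact ⟨z, hz, fun j hj => hag j (hVmono i hkk hj), rfl⟩
  -- rneg facts
  have hSne : (Sxi ξ).Nonempty := ⟨fun _ _ => true, fun _ _ _ => rfl⟩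
  have hrneg_bdd : ∀ a : Bool, BddBelow ((fun z => pcond φ W g i t a z) '' Sxi ξ) := by
    intro a
    refine ⟨0, ?_⟩
    rintro v ⟨z, hz, rfl⟩
    exact hpc0 a z
  have hrneg_le_rk : ∀ k a, ∀ x ∈ Sxi ξ, rneg φ W g ξ i t a ≤ rk φ W g ξ V i t k a x := by
    intro k a x hx
    refine csInf_le_csInf (hrneg_bdd a) ⟨_, hSK_mem k a x hx⟩ ?_
    rintro v ⟨z, hz, -, rfl⟩
    exact ⟨z, hz, rfl⟩
  have hrneg_le_pc : ∀ a, ∀ x ∈ Sxi ξ, rneg φ W g ξ i t a ≤ pcond φ W g i t a x :=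
    fun a x hx => csInf_le (hrneg_bdd a) ⟨x, hx, rfl⟩
  have hrneg0 : ∀ a, 0 ≤ rneg φ W g ξ i t a := by
    intro a
    refine le_csInf (hSne.image _) ?_
    rintro v ⟨z, hz, rfl⟩
    exact hpc0 a z
  have hrneg_true : δ ≤ rneg φ W g ξ i t true := by
    refine le_csInf (hSne.image _) ?_
    rintro v ⟨z, hz, rfl⟩
    simpa [pcond, spikeP] using hφδ i (pot W g i t z) (t - lastSpike z i t).toNat
  -- lamNeg facts
  have hlN_def : lamNeg φ W g ξ i t = rneg φ W g ξ i t true + rneg φ W g ξ i t false := rfl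
  have hlN_pos : 0 < lamNeg φ W g ξ i t := by
    have := hrneg0 false
    rw [hlN_def]
    linarith [lt_of_lt_of_le hδ hrneg_true]
  have hlN0 : 0 ≤ lamNeg φ W g ξ i t := le_of_lt hlN_pos
  -- alp facts
  have hal_bdd : ∀ k, BddBelow
      ((fun x => rk φ W g ξ V i t k true x + rk φ W g ξ V i t k false x) '' Sxi ξ) := by
    intro k
    refine ⟨0, ?_⟩
    rintro v ⟨x, hx, rfl⟩
    exact add_nonneg (hrk0 k true x hx) (hrk0 k false x hx)
  have hal_le_elem : ∀ k, ∀ x ∈ Sxi ξ,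
      alp φ W g ξ V i t k ≤ rk φ W g ξ V i t k true x + rk φ W g ξ V i t k false x :=
    fun k x hx => csInf_le (hal_bdd k) ⟨x, hx, rfl⟩
  have hal_le1 : ∀ k, alp φ W g ξ V i t k ≤ 1 := by
    intro k
    obtain ⟨x₀, hx₀⟩ := hSne
    refine (hal_le_elem k x₀ hx₀).trans ?_
    have h1 := hrk_le k true x₀ hx₀
    have h2 := hrk_le k false x₀ hx₀
    have h3 := hpcsum x₀
    linarith
  have hlN_le_al : ∀ k, lamNeg φ W g ξ i t ≤ alp φ W g ξ V i t k := by
    intro k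
    refine le_csInf (hSne.image _) ?_
    rintro v ⟨x, hx, rfl⟩
    rw [hlN_def]
    exact add_le_add (hrneg_le_rk k true x hx) (hrneg_le_rk k false x hx)
  have hlN_le1 : lamNeg φ W g ξ i t ≤ 1 := (hlN_le_al 0).trans (hal_le1 0)
  have hal0 : ∀ k, 0 ≤ alp φ W g ξ V i t k := fun k => hlN0.trans (hlN_le_al k)
  have hal_mono : ∀ k k', k ≤ k' → alp φ W g ξ V i t k ≤ alp φ W g ξ V i t k' := by
    intro k k' hkk
    refine le_csInf (hSne.image _) ?_
    rintro v ⟨x, hx, rfl⟩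
    exact (hal_le_elem k x hx).trans
      (add_le_add (hrk_mono true x hx k k' hkk) (hrk_mono false x hx k k' hkk))
  have hal_lb : ∀ k, 1 - 2 * (γ * (tail k * GN)) ≤ alp φ W g ξ V i t k := by
    intro k
    refine le_csInf (hSne.image _) ?_
    rintro v ⟨x, hx, rfl⟩
    have h1 := hrk_lb k true x hx
    have h2 := hrk_lb k false x hx
    have h3 := hpcsum x
    dsimp only
    linarith
  have hal_tendsto : Filter.Tendsto (alp φ W g ξ V i t) Filter.atTop (nhds 1) := by
    have hb : Filter.Tendsto (fun k => 1 - 2 * (γ * (tail k * GN))) Filter.atTop (nhds 1) := by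
      have h1 : Filter.Tendsto (fun k => 2 * (γ * (tail k * GN))) Filter.atTop (nhds 0) := by
        have := ((htail_tendsto.mul_const GN).const_mul γ).const_mul 2
        simpa using this
      have := tendsto_const_nhds.sub h1 (f := fun _ : ℕ => (1:ℝ))
      simpa using this
    exact tendsto_of_tendsto_of_tendsto_of_le_of_le hb tendsto_const_nhds hal_lb hal_le1
  -- lam facts
  have hla0eq : lam φ W g ξ V i t 0 = alp φ W g ξ V i t 0 - lamNeg φ W g ξ i t := rfl
  have hlaSeq : ∀ k, lam φ W g ξ V i t (k+1)
      = alp φ W g ξ V i t (k+1) - alp φ W g ξ V i t k := fun _ => rfl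
  have hla0 : ∀ k, 0 ≤ lam φ W g ξ V i t k := by
    intro k
    cases k with
    | zero => rw [hla0eq]; linarith [hlN_le_al 0]
    | succ m => rw [hlaSeq m]; linarith [hal_mono m (m+1) (Nat.le_succ m)]
  have hla1 : ∀ k, lam φ W g ξ V i t k ≤ 1 := by
    intro k
    cases k with
    | zero => rw [hla0eq]; linarith [hal_le1 0, hlN0]
    | succ m => rw [hlaSeq m]; linarith [hal_le1 (m+1), hal0 m]
  have hpartial : ∀ n, ∑ k ∈ Finset.range (n+1), lam φ W g ξ V i t k
      = alp φ W g ξ V i t n - lamNeg φ W g ξ i t := by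
    intro n
    induction n with
    | zero => simpa using hla0eq
    | succ m ih => rw [Finset.sum_range_succ, ih, hlaSeq m]; ring
  have hla_summable : Summable (lam φ W g ξ V i t) := by
    refine summable_of_sum_range_le (c := 1) hla0 (fun n => ?_)
    cases n with
    | zero => simp
    | succ m => rw [hpartial m]; linarith [hal_le1 m, hlN0]
  have hla_tsum : ∑' k, lam φ W g ξ V i t k = 1 - lamNeg φ W g ξ i t := by
    have h1 := hla_summable.hasSum.tendsto_sum_nat
    have h2 : Filter.Tendsto (fun n : ℕ => ∑ k ∈ Finset.range (n+1), lam φ W g ξ V i t k)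
        Filter.atTop (nhds (∑' k, lam φ W g ξ V i t k)) :=
      h1.comp (Filter.tendsto_add_atTop_nat 1)
    have h3 : Filter.Tendsto (fun n : ℕ => ∑ k ∈ Finset.range (n+1), lam φ W g ξ V i t k)
        Filter.atTop (nhds (1 - lamNeg φ W g ξ i t)) := by
      have := hal_tendsto.sub_const (lamNeg φ W g ξ i t)
      refine this.congr fun n => (hpartial n).symm
    exact tendsto_nhds_unique h2 h3
  -- kalC facts
  have hC0eq : ∀ x, kalC φ W g ξ V i t 0 x
      = min (rk φ W g ξ V i t 0 false x - rneg φ W g ξ i t false) (lam φ W g ξ V i t 0) :=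
    fun _ => rfl
  have hCSeq : ∀ k x, kalC φ W g ξ V i t (k+1) x
      = min (rk φ W g ξ V i t (k+1) false x - rneg φ W g ξ i t false)
        (kalC φ W g ξ V i t k x + lam φ W g ξ V i t (k+1)) := fun _ _ => rfl
  have hD0eq : ∀ x, kalD φ W g ξ V i t 0 x = kalC φ W g ξ V i t 0 x := fun _ => rfl
  have hDSeq : ∀ k x, kalD φ W g ξ V i t (k+1) x
      = kalC φ W g ξ V i t (k+1) x - kalC φ W g ξ V i t k x := fun _ _ => rfl
  have hC_le : ∀ k x, kalC φ W g ξ V i t k x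
      ≤ rk φ W g ξ V i t k false x - rneg φ W g ξ i t false := by
    intro k x
    cases k with
    | zero => rw [hC0eq x]; exact min_le_left _ _
    | succ m => rw [hCSeq m x]; exact min_le_left _ _
  have hD_nonneg : ∀ k, ∀ x ∈ Sxi ξ, 0 ≤ kalD φ W g ξ V i t k x := by
    intro k x hx
    cases k with
    | zero =>
      rw [hD0eq x, hC0eq x]
      exact le_min (sub_nonneg.mpr (hrneg_le_rk 0 false x hx)) (hla0 0)
    | succ m =>
      rw [hDSeq m x, hCSeq m x]
      have h1 : kalC φ W g ξ V i t m x ≤ rk φ W g ξ V i t (m+1) false x - rneg φ W g ξ i t false :=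
        (hC_le m x).trans (by
          have := hrk_mono false x hx m (m+1) (Nat.le_succ m); linarith)
      have h2 : kalC φ W g ξ V i t m x ≤ kalC φ W g ξ V i t m x + lam φ W g ξ V i t (m+1) :=
        le_add_of_nonneg_right (hla0 (m+1))
      have := le_min h1 h2
      linarith
  have hD_le : ∀ k x, kalD φ W g ξ V i t k x ≤ lam φ W g ξ V i t k := by
    intro k x
    cases k with
    | zero => rw [hD0eq x, hC0eq x]; exact min_le_right _ _
    | succ m =>
      rw [hDSeq m x, hCSeq m x]
      have := min_le_right (rk φ W g ξ V i t (m+1) false x - rneg φ W g ξ i t false)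
        (kalC φ W g ξ V i t m x + lam φ W g ξ V i t (m+1))
      linarith
  have hCD : ∀ k x, ∑ l ∈ Finset.range (k+1), kalD φ W g ξ V i t l x
      = kalC φ W g ξ V i t k x := by
    intro k x
    induction k with
    | zero => simpa using hD0eq x
    | succ m ih => rw [Finset.sum_range_succ, ih, hDSeq m x]; ring
  have hE : ∀ k, ∀ x ∈ Sxi ξ,
      alp φ W g ξ V i t k - lamNeg φ W g ξ i t - kalC φ W g ξ V i t k x
      ≤ rk φ W g ξ V i t k true x - rneg φ W g ξ i t true := by
    intro k x hx
    induction k with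
    | zero =>
      rw [hC0eq x]
      rcases le_total (rk φ W g ξ V i t 0 false x - rneg φ W g ξ i t false)
          (lam φ W g ξ V i t 0) with h | h
      · rw [min_eq_left h]
        have h1 := hal_le_elem 0 x hx
        rw [hlN_def]
        linarith
      · rw [min_eq_right h, hla0eq]
        have := hrneg_le_rk 0 true x hx
        linarith
    | succ m ih =>
      rw [hCSeq m x]
      rcases le_total (rk φ W g ξ V i t (m+1) false x - rneg φ W g ξ i t false)
          (kalC φ W g ξ V i t m x + lam φ W g ξ V i t (m+1)) with h | h
      · rw [min_eq_left h]
        have h1 := hal_le_elem (m+1) x hx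
        rw [hlN_def]
        linarith
      · rw [min_eq_right h, hlaSeq m]
        have h2 := hrk_mono true x hx m (m+1) (Nat.le_succ m)
        linarith
  have hC_lim : ∀ x ∈ Sxi ξ, Filter.Tendsto (fun k => kalC φ W g ξ V i t k x)
      Filter.atTop (nhds (pcond φ W g i t false x - rneg φ W g ξ i t false)) := by
    intro x hx
    have hub : ∀ k, kalC φ W g ξ V i t k x
        ≤ pcond φ W g i t false x - rneg φ W g ξ i t false := fun k =>
      (hC_le k x).trans (by have := hrk_le k false x hx; linarith)
    have hlb : ∀ k, alp φ W g ξ V i t k - lamNeg φ W g ξ i t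
        - (pcond φ W g i t true x - rneg φ W g ξ i t true) ≤ kalC φ W g ξ V i t k x := by
      intro k
      have h1 := hE k x hx
      have h2 := hrk_le k true x hx
      linarith
    have hval : 1 - lamNeg φ W g ξ i t - (pcond φ W g i t true x - rneg φ W g ξ i t true)
        = pcond φ W g i t false x - rneg φ W g ξ i t false := by
      have := hpcsum x
      rw [hlN_def] at *
      linarith
    have hl : Filter.Tendsto (fun k => alp φ W g ξ V i t k - lamNeg φ W g ξ i t
        - (pcond φ W g i t true x - rneg φ W g ξ i t true)) Filter.atTop
        (nhds (pcond φ W g i t false x - rneg φ W g ξ i t false)) := by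
      rw [← hval]
      exact (hal_tendsto.sub_const _).sub_const _
    exact tendsto_of_tendsto_of_tendsto_of_le_of_le hl tendsto_const_nhds hlb hub
  have hD_hasSum : ∀ x ∈ Sxi ξ, HasSum (fun k => kalD φ W g ξ V i t k x)
      (pcond φ W g i t false x - rneg φ W g ξ i t false) := by
    intro x hx
    have hsumm : Summable fun k => kalD φ W g ξ V i t k x := by
      refine summable_of_sum_range_le
        (c := pcond φ W g i t false x - rneg φ W g ξ i t false)
        (fun k => hD_nonneg k x hx) (fun n => ?_)
      cases n with
      | zero => simpa using sub_nonneg.mpr (hrneg_le_pc false x hx)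
      | succ m =>
        rw [hCD m x]
        exact (hC_le m x).trans (by have := hrk_le m false x hx; linarith)
    have h1 := hsumm.hasSum
    have h2 : Filter.Tendsto (fun n : ℕ => ∑ k ∈ Finset.range (n+1), kalD φ W g ξ V i t k x)
        Filter.atTop (nhds (∑' k, kalD φ W g ξ V i t k x)) :=
      h1.tendsto_sum_nat.comp (Filter.tendsto_add_atTop_nat 1)
    have h3 : Filter.Tendsto (fun n : ℕ => ∑ k ∈ Finset.range (n+1), kalD φ W g ξ V i t k x)
        Filter.atTop (nhds (pcond φ W g i t false x - rneg φ W g ξ i t false)) :=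
      (hC_lim x hx).congr fun n => (hCD n x).symm
    have := tendsto_nhds_unique h2 h3
    rwa [this] at h1
  -- congruence: dependence only on the coordinates in V i k × window
  have hrk_congr : ∀ k l, l ≤ k → ∀ (a : Bool), ∀ x ∈ Sxi ξ, ∀ y ∈ Sxi ξ,
      (∀ j ∈ V i k, ∀ s, lastSpike x i t ≤ s → s < t → x s j = y s j) →
      rk φ W g ξ V i t l a x = rk φ W g ξ V i t l a y := by
    intro k l hlk a x hx y hy hag
    have hLxy : lastSpike y i t = lastSpike x i t :=
      hLeq x hx y hy fun s h1 h2 => (hag i (hiV k) s h1 h2).symm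
    rw [hrk_eq, hrk_eq]
    congr 1
    ext v
    constructor
    · rintro ⟨z, hz, hzag, rfl⟩
      refine ⟨z, hz, fun j hj s h1 h2 => ?_, rfl⟩
      rw [hLxy] at h1
      rw [hzag j hj s h1 h2]
      exact hag j (hVmono i hlk hj) s h1 h2
    · rintro ⟨z, hz, hzag, rfl⟩
      refine ⟨z, hz, fun j hj s h1 h2 => ?_, rfl⟩
      rw [hzag j hj s (by rw [hLxy]; exact h1) h2]
      exact (hag j (hVmono i hlk hj) s h1 h2).symm
  have hC_congr : ∀ k, ∀ x ∈ Sxi ξ, ∀ y ∈ Sxi ξ,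
      (∀ j ∈ V i k, ∀ s, lastSpike x i t ≤ s → s < t → x s j = y s j) →
      ∀ l, l ≤ k → kalC φ W g ξ V i t l x = kalC φ W g ξ V i t l y := by
    intro k x hx y hy hag l
    induction l with
    | zero =>
      intro h
      rw [hC0eq, hC0eq, hrk_congr k 0 (Nat.zero_le k) false x hx y hy hag]
    | succ m ih =>
      intro h
      rw [hCSeq, hCSeq, hrk_congr k (m+1) h false x hx y hy hag,
        ih (Nat.le_of_succ_le h)]
  have hP_congr : ∀ k (a : Bool), ∀ x ∈ Sxi ξ, ∀ y ∈ Sxi ξ,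
      (∀ j ∈ V i k, ∀ s, lastSpike x i t ≤ s → s < t → x s j = y s j) →
      kalP φ W g ξ V i t k a x = kalP φ W g ξ V i t k a y := by
    intro k a x hx y hy hag
    have hD_congr : kalD φ W g ξ V i t k x = kalD φ W g ξ V i t k y := by
      cases k with
      | zero => rw [hD0eq, hD0eq, hC_congr 0 x hx y hy hag 0 le_rfl]
      | succ m =>
        rw [hDSeq, hDSeq, hC_congr (m+1) x hx y hy hag (m+1) le_rfl,
          hC_congr (m+1) x hx y hy hag m (Nat.le_succ m)]
    unfold kalP
    rw [hD_congr]
  have hDzero : ∀ k, ∀ x ∈ Sxi ξ, lam φ W g ξ V i t k = 0 → kalD φ W g ξ V i t k x = 0 :=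
    fun k x hx h => le_antisymm (h ▸ hD_le k x) (hD_nonneg k x hx)
  have hP2 : ∀ k, ∀ x ∈ Sxi ξ, kalP φ W g ξ V i t k true x ∈ Set.Icc (0:ℝ) 1 ∧
      kalP φ W g ξ V i t k false x + kalP φ W g ξ V i t k true x = 1 := by
    intro k x hx
    by_cases h : lam φ W g ξ V i t k = 0
    · simp only [kalP, if_pos h]
      norm_num
    · have hpos : 0 < lam φ W g ξ V i t k := (hla0 k).lt_of_ne (Ne.symm h)
      have hd0 := hD_nonneg k x hx
      have hdle := hD_le k x
      have hdiv0 : 0 ≤ kalD φ W g ξ V i t k x / lam φ W g ξ V i t k :=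
        div_nonneg hd0 hpos.le
      have hdiv1 : kalD φ W g ξ V i t k x / lam φ W g ξ V i t k ≤ 1 :=
        (div_le_one hpos).mpr hdle
      simp only [kalP, if_neg h, if_true, Bool.false_eq_true, if_false]
      exact ⟨⟨by linarith, by linarith⟩, by ring⟩
  have hfalse_id : ∀ x ∈ Sxi ξ, ∀ k,
      lam φ W g ξ V i t k * kalP φ W g ξ V i t k false x = kalD φ W g ξ V i t k x := by
    intro x hx k
    by_cases h : lam φ W g ξ V i t k = 0
    · rw [h, zero_mul, hDzero k x hx h]
    · simp only [kalP, if_neg h, Bool.false_eq_true, if_false]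
      field_simp
  have htrue_id : ∀ x ∈ Sxi ξ, ∀ k,
      lam φ W g ξ V i t k * kalP φ W g ξ V i t k true x
      = lam φ W g ξ V i t k - kalD φ W g ξ V i t k x := by
    intro x hx k
    by_cases h : lam φ W g ξ V i t k = 0
    · rw [h, zero_mul, hDzero k x hx h]; ring
    · simp only [kalP, if_neg h, if_true]
      field_simp
  have hfinal : ∀ x ∈ Sxi ξ, ∀ (a : Bool), pcond φ W g i t a x
      = lamNeg φ W g ξ i t * (rneg φ W g ξ i t a / lamNeg φ W g ξ i t)
        + ∑' k, lam φ W g ξ V i t k * kalP φ W g ξ V i t k a x := by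
    intro x hx a
    rw [mul_div_cancel₀ _ hlN_pos.ne']
    cases a
    · rw [tsum_congr (hfalse_id x hx), (hD_hasSum x hx).tsum_eq]
      ring
    · rw [tsum_congr (htrue_id x hx),
        Summable.tsum_sub hla_summable (hD_hasSum x hx).summable, hla_tsum,
        (hD_hasSum x hx).tsum_eq]
      have h1 := hpcsum x
      rw [hlN_def]
      linarith
  refine ⟨⟨hlN0, hlN_le1⟩, fun k => ⟨hla0 k, hla1 k⟩, by rw [hla_tsum]; ring,
    kalP φ W g ξ V i t, ?_, ?_, ?_⟩
  · intro k a x hx y hy hag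
    exact hP_congr k a x hx y hy hag
  · intro k x hx
    exact hP2 k x hx
  · intro x hx a
    exact hfinal x hx a
end
end

section
/- Upper bound on the decomposition weights in random environment. Under the assumptions sup_i ∑_j |W_{j→i}| < ∞, uniform Lipschitz continuity of φ with constant γ, φ_i ≥ δ > 0 and G(n) < ∞ for all n, for every (i,t) with ξ_t(i) = 0 and every k ≥ 1: λ_{(i,t)}(k) ≤ γ ∑_{j∉V_i(k−1)} |W_{j→i}| ∑_{s=R_t^i}^{t−1} g_j(t−s)(1 − ξ_s(j)) ≤ γ · G(t − R_t^i) · ∑_{j∉V_i(k−1)} |W_{j→i}|. -/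
open MeasureTheory Filter Set
open scoped ENNReal

noncomputable section

namespace NeuronSysAux

open NeuronSys

variable {I : Type*}

lemma lastSpike_eq_of (x : ℤ → I → Bool) (i : I) (t L : ℤ)
    (hLt : L < t) (hL : x L i = true)
    (hwin : ∀ u : ℤ, L < u → u < t → x u i = false) :
    lastSpike x i t = L := by
  unfold lastSpike
  apply le_antisymm
  · refine csSup_le ⟨L, hLt, hL⟩ ?_
    rintro s ⟨hst, hs⟩
    by_contra h
    push_neg at h
    rw [hwin s h hst] at hs
    simp at hs
  · exact le_csSup ⟨t, fun s hs => hs.1.le⟩ ⟨hLt, hL⟩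

lemma lastSpike_spec (x : ℤ → I → Bool) (i : I) (t : ℤ)
    (h : ∃ s : ℤ, s < t ∧ x s i = true) :
    lastSpike x i t < t ∧ x (lastSpike x i t) i = true ∧
      ∀ u : ℤ, lastSpike x i t < u → u < t → x u i = false := by
  have hmem : lastSpike x i t ∈ {s : ℤ | s < t ∧ x s i = true} :=
    Int.csSup_mem h ⟨t, fun s hs => hs.1.le⟩
  refine ⟨hmem.1, hmem.2, fun u hu hut => ?_⟩
  by_contra hc
  have hmem2 : u ∈ {s : ℤ | s < t ∧ x s i = true} :=
    ⟨hut, by simpa using hc⟩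
  have h2 : u ≤ lastSpike x i t := le_csSup (s := {s : ℤ | s < t ∧ x s i = true})
    ⟨t, fun s hs => hs.1.le⟩ hmem2
  omega

/-- The potential restricted to a finite time window. -/
noncomputable def Fpot (W : I → I → ℝ) (g : I → ℕ → ℝ) (i : I) (t L : ℤ)
    (z : ℤ → I → Bool) (j : I) : ℝ :=
  ∑ s ∈ Finset.Icc L (t - 1), if z s j = true then W j i * g j (t - s).toNat else 0

lemma pot_eq (W : I → I → ℝ) (g : I → ℕ → ℝ) (i : I) (t L : ℤ)
    (z : ℤ → I → Bool) (hLt : L < t) (hL : z L i = true)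
    (hwin : ∀ u : ℤ, L < u → u < t → z u i = false) :
    pot W g i t z = ∑' j, Fpot W g i t L z j := by
  unfold pot Fpot
  refine tsum_congr fun j => ?_
  rw [tsum_eq_sum (s := Finset.Icc L (t - 1)) ?_]
  · refine Finset.sum_congr rfl fun s hs => ?_
    simp only [Finset.mem_Icc] at hs
    by_cases hz : z s j = true
    · rw [if_pos hz, if_pos ⟨by omega, fun u hu hut => hwin u (by omega) hut, hz⟩]
    · rw [if_neg hz, if_neg]
      rintro ⟨-, -, h⟩
      exact hz h
  · intro s hs
    simp only [Finset.mem_Icc, not_and_or, not_le] at hs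
    rcases hs with hs | hs
    · rw [if_neg]
      rintro ⟨hst, hw, -⟩
      have := hw L hs hLt
      rw [hL] at this
      simp at this
    · rw [if_neg]
      rintro ⟨hst, -, -⟩
      omega

lemma abs_Fpot_le (W : I → I → ℝ) (g : I → ℕ → ℝ) (i : I) (t L : ℤ)
    (z : ℤ → I → Bool) (j : I) (hg : ∀ j n, 0 ≤ g j n) :
    |Fpot W g i t L z j| ≤ |W j i| * ∑ s ∈ Finset.Icc L (t - 1), g j (t - s).toNat := by
  rw [Finset.mul_sum]
  refine (Finset.abs_sum_le_sum_abs _ _).trans (Finset.sum_le_sum fun s _ => ?_)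
  by_cases hz : z s j = true
  · rw [if_pos hz, abs_mul, abs_of_nonneg (hg j _)]
  · rw [if_neg hz, abs_zero]
    have := hg j (t - s).toNat
    positivity

lemma summable_Fpot (W : I → I → ℝ) (g : I → ℕ → ℝ) (i : I) (t L : ℤ)
    (z : ℤ → I → Bool) (C : ℝ) (hg : ∀ j n, 0 ≤ g j n)
    (hW : Summable fun j => |W j i|)
    (hC : ∀ j, (∑ s ∈ Finset.Icc L (t - 1), g j (t - s).toNat) ≤ C) :
    Summable (Fpot W g i t L z) := by
  refine Summable.of_norm_bounded (g := fun j => |W j i| * C) (hW.mul_right C) fun j => ?_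
  refine (abs_Fpot_le W g i t L z j hg).trans ?_
  exact mul_le_mul_of_nonneg_left (hC j) (abs_nonneg _)

lemma pot_diff_le (W : I → I → ℝ) (g : I → ℕ → ℝ) (ξ : ℤ → I → Bool)
    (i : I) (t L : ℤ) (C : ℝ) (hg : ∀ j n, 0 ≤ g j n)
    (hW : Summable fun j => |W j i|)
    (hC : ∀ j, (∑ s ∈ Finset.Icc L (t - 1), g j (t - s).toNat) ≤ C)
    (z z' : ℤ → I → Bool) (hz : z ∈ Sxi ξ) (hz' : z' ∈ Sxi ξ)
    (hLt : L < t) (hLz : z L i = true)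
    (hwz : ∀ u : ℤ, L < u → u < t → z u i = false)
    (hLz' : z' L i = true)
    (hwz' : ∀ u : ℤ, L < u → u < t → z' u i = false)
    (E : Finset I)
    (hagree : ∀ j ∉ E, ∀ s : ℤ, L ≤ s → s < t → z s j = z' s j) :
    |pot W g i t z - pot W g i t z'| ≤
      ∑ j ∈ E, |W j i| * ∑ s ∈ Finset.Icc L (t - 1),
        g j (t - s).toNat * (if ξ s j then 0 else 1) := by
  have hSz := summable_Fpot W g i t L z C hg hW hC
  have hSz' := summable_Fpot W g i t L z' C hg hW hC
  rw [pot_eq W g i t L z hLt hLz hwz, pot_eq W g i t L z' hLt hLz' hwz',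
    ← Summable.tsum_sub hSz hSz']
  have hsupp : ∀ j ∉ E, Fpot W g i t L z j - Fpot W g i t L z' j = 0 := by
    intro j hj
    rw [sub_eq_zero]
    refine Finset.sum_congr rfl fun s hs => ?_
    simp only [Finset.mem_Icc] at hs
    rw [hagree j hj s hs.1 (by omega)]
  rw [tsum_eq_sum hsupp]
  refine (Finset.abs_sum_le_sum_abs _ _).trans (Finset.sum_le_sum fun j _ => ?_)
  unfold Fpot
  rw [← Finset.sum_sub_distrib, Finset.mul_sum]
  refine (Finset.abs_sum_le_sum_abs _ _).trans (Finset.sum_le_sum fun s hs => ?_)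
  by_cases hξ : ξ s j = true
  · rw [hz j s hξ, hz' j s hξ, if_pos hξ]
    simp [hg j (t - s).toNat]
  · rw [if_neg hξ]
    have h1 : |(if z s j = true then W j i * g j (t - s).toNat else 0) -
        (if z' s j = true then W j i * g j (t - s).toNat else 0)| ≤
        |W j i * g j (t - s).toNat| := by
      split_ifs <;> simp [abs_nonneg] <;> positivity
    refine h1.trans ?_
    rw [abs_mul, abs_of_nonneg (hg j _)]
    ring_nf
    exact le_rfl

lemma pcond_nonneg (φ : I → ℝ → ℕ → ℝ) (W : I → I → ℝ) (g : I → ℕ → ℝ)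
    (i : I) (t : ℤ) (a : Bool) (z : ℤ → I → Bool)
    (hφrange : ∀ i s n, φ i s n ∈ Set.Icc (0:ℝ) 1) :
    0 ≤ pcond φ W g i t a z := by
  cases a
  · have := (hφrange i (pot W g i t z) (t - lastSpike z i t).toNat).2
    simp only [pcond, spikeP, Bool.false_eq_true, if_false]
    linarith
  · simp only [pcond, spikeP, if_true]
    exact (hφrange i (pot W g i t z) (t - lastSpike z i t).toNat).1

end NeuronSysAux

open NeuronSys NeuronSysAux

/-- **Upper bound on the decomposition weights in random environment.** For `k ≥ 1`,
`λ_{(i,t)}(k) ≤ γ ∑_{j∉V_i(k-1)} |W_{j→i}| ∑_{s=R_t^i}^{t-1} g_j(t-s)(1-ξ_s(j))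
 ≤ γ G(t-R_t^i) ∑_{j∉V_i(k-1)} |W_{j→i}|`. -/
theorem lam_upper_bound_random_environment
    {I : Type*} [Countable I] [Nonempty I] [DecidableEq I]
    (W : I → I → ℝ) (g : I → ℕ → ℝ) (V : I → ℕ → Finset I)
    (γ δ : ℝ) (φ : I → ℝ → ℕ → ℝ) (ξ : ℤ → I → Bool)
    (hWdiag : ∀ j, W j j = 0)
    (hgpos : ∀ j n, 0 ≤ g j n)
    (hγ : 0 < γ) (hδ : 0 < δ)
    (hWsum : (⨆ i : I, ∑' j : I, ENNReal.ofReal |W j i|) < ⊤)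
    (hV0 : ∀ i, V i 0 = {i})
    (hVmono : ∀ i, Monotone (V i))
    (hVunion : ∀ i, (⋃ k, (V i k : Set I)) = {j | j ≠ i ∧ W j i ≠ 0} ∪ {i})
    (hφrange : ∀ i s n, φ i s n ∈ Set.Icc (0:ℝ) 1)
    (hφLip : ∀ i s s' n, |φ i s n - φ i s' n| ≤ γ * |s - s'|)
    (hφδ : ∀ i s n, δ ≤ φ i s n)
    (hG : ∀ n, Gfun g n < ⊤)
    (hξ : ∀ (i : I) (t : ℤ), ∃ s : ℤ, s < t ∧ ξ s i = true)
    (i : I) (t : ℤ) (hit : ξ t i = false)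
    (k : ℕ) (hk : 1 ≤ k) :
    lam φ W g ξ V i t k
      ≤ γ * ∑' j : I, (if j ∈ V i (k-1) then 0 else
          |W j i| * ∑ s ∈ Finset.Icc (lastXi ξ i t) (t-1),
            g j (t - s).toNat * (if ξ s j then 0 else 1)) ∧
    γ * (∑' j : I, (if j ∈ V i (k-1) then 0 else
          |W j i| * ∑ s ∈ Finset.Icc (lastXi ξ i t) (t-1),
            g j (t - s).toNat * (if ξ s j then 0 else 1)))
      ≤ γ * (⨆ j : I, ∑ m ∈ Finset.Icc 1 (t - lastXi ξ i t).toNat, g j m)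
          * ∑' j : I, (if j ∈ V i (k-1) then 0 else |W j i|) := by
  obtain ⟨m, rfl⟩ : ∃ m, k = m + 1 := ⟨k - 1, (Nat.succ_pred_eq_of_pos hk).symm⟩
  simp only [Nat.add_sub_cancel]
  have hxiS : ξ ∈ Sxi ξ := fun j s h => h
  set R := lastXi ξ i t with hR
  have hRspec := lastSpike_spec ξ i t (hξ i t)
  have hRL : R = lastSpike ξ i t := hR
  have hRt : R < t := by rw [hRL]; exact hRspec.1
  set C := ⨆ j : I, ∑ m' ∈ Finset.Icc 1 (t - R).toNat, g j m' with hCdef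
  have hCb : BddAbove (Set.range fun j : I => ∑ m' ∈ Finset.Icc 1 (t - R).toNat, g j m') := by
    refine ⟨(Gfun g (t - R).toNat).toReal, ?_⟩
    rintro _ ⟨j, rfl⟩
    have h1 : ENNReal.ofReal (∑ m' ∈ Finset.Icc 1 (t - R).toNat, g j m')
        ≤ Gfun g (t - R).toNat := by
      rw [ENNReal.ofReal_sum_of_nonneg fun m' _ => hgpos j m']
      exact le_iSup (fun j : I => ∑ m' ∈ Finset.Icc 1 (t - R).toNat,
        ENNReal.ofReal (g j m')) j
    calc ∑ m' ∈ Finset.Icc 1 (t - R).toNat, g j m'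
        = (ENNReal.ofReal (∑ m' ∈ Finset.Icc 1 (t - R).toNat, g j m')).toReal :=
          (ENNReal.toReal_ofReal (Finset.sum_nonneg fun m' _ => hgpos j m')).symm
      _ ≤ (Gfun g (t - R).toNat).toReal :=
          ENNReal.toReal_mono (hG (t - R).toNat).ne h1
  have hjC : ∀ j, (∑ m' ∈ Finset.Icc 1 (t - R).toNat, g j m') ≤ C :=
    fun j => le_ciSup hCb j
  have hC0 : 0 ≤ C :=
    le_trans (Finset.sum_nonneg fun m' _ => hgpos (Classical.arbitrary I) m') (hjC _)
  have hsumC : ∀ L : ℤ, R ≤ L → ∀ j,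
      (∑ s ∈ Finset.Icc L (t - 1), g j (t - s).toNat) ≤ C := by
    intro L hRleL j
    have hinj : ∀ s ∈ Finset.Icc L (t - 1), ∀ s' ∈ Finset.Icc L (t - 1),
        (t - s).toNat = (t - s').toNat → s = s' := by
      intro s hs s' hs' h
      simp only [Finset.mem_Icc] at hs hs'
      omega
    rw [← Finset.sum_image hinj]
    refine le_trans (Finset.sum_le_sum_of_subset_of_nonneg ?_
      fun m' _ _ => hgpos j m') (hjC j)
    intro m' hm'
    simp only [Finset.mem_image, Finset.mem_Icc] at hm' ⊢
    obtain ⟨s, hs, rfl⟩ := hm'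
    omega
  have SummW : Summable fun j : I => |W j i| := by
    have h1 : (∑' j : I, ENNReal.ofReal |W j i|) ≠ ⊤ :=
      ((le_iSup (fun i : I => ∑' j : I, ENNReal.ofReal |W j i|) i).trans_lt hWsum).ne
    exact (ENNReal.summable_toReal h1).congr fun j => ENNReal.toReal_ofReal (abs_nonneg _)
  set D : I → ℝ := fun j => if j ∈ V i m then 0 else
      |W j i| * ∑ s ∈ Finset.Icc R (t - 1),
        g j (t - s).toNat * (if ξ s j then 0 else 1) with hDdef
  have hD0 : ∀ j, 0 ≤ D j := by
    intro j
    rw [hDdef]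
    dsimp only
    split_ifs with hj
    · exact le_rfl
    · refine mul_nonneg (abs_nonneg _) (Finset.sum_nonneg fun s _ => ?_)
      by_cases hb : ξ s j = true
      · simp [hb]
      · simp [hb, hgpos j _]
  have hDleC : ∀ j, D j ≤ (if j ∈ V i m then (0:ℝ) else |W j i|) * C := by
    intro j
    rw [hDdef]
    dsimp only
    split_ifs with hj
    · simp
    · refine mul_le_mul_of_nonneg_left ?_ (abs_nonneg _)
      refine le_trans (Finset.sum_le_sum fun s _ => ?_) (hsumC R le_rfl j)
      by_cases hb : ξ s j = true
      · simp [hb, hgpos j _]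
      · simp [hb]
  have SummH : Summable fun j : I => (if j ∈ V i m then (0:ℝ) else |W j i|) := by
    refine Summable.of_nonneg_of_le (fun j => ?_) (fun j => ?_) SummW
    · split_ifs
      · exact le_rfl
      · exact abs_nonneg _
    · split_ifs
      · exact abs_nonneg _
      · exact le_rfl
  have SummD : Summable D :=
    Summable.of_nonneg_of_le hD0 hDleC (SummH.mul_right C)
  have hrk_nonneg : ∀ (k' : ℕ) (a : Bool) (y : ℤ → I → Bool),
      0 ≤ rk φ W g ξ V i t k' a y := by
    intro k' a y
    refine Real.sInf_nonneg fun v hv => ?_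
    obtain ⟨z, hz, -, rfl⟩ := hv
    exact pcond_nonneg φ W g i t a z hφrange
  have hbdd : ∀ (k' : ℕ) (a : Bool) (y : ℤ → I → Bool),
      BddBelow {v | ∃ z ∈ Sxi ξ,
        (∀ j ∈ V i k', ∀ s : ℤ, lastSpike y i t ≤ s → s < t → z s j = y s j) ∧
        v = pcond φ W g i t a z} := by
    intro k' a y
    refine ⟨0, ?_⟩
    rintro v ⟨z, hz, -, rfl⟩
    exact pcond_nonneg φ W g i t a z hφrange
  have hne : ∀ (k' : ℕ) (a : Bool) (y : ℤ → I → Bool), y ∈ Sxi ξ →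
      Set.Nonempty {v | ∃ z ∈ Sxi ξ,
        (∀ j ∈ V i k', ∀ s : ℤ, lastSpike y i t ≤ s → s < t → z s j = y s j) ∧
        v = pcond φ W g i t a z} :=
    fun k' a y hy => ⟨pcond φ W g i t a y, y, hy, fun _ _ _ _ _ => rfl, rfl⟩
  have hiMem : i ∈ V i m := by
    have h0 : i ∈ V i 0 := by rw [hV0]; exact Finset.mem_singleton_self i
    exact hVmono i (Nat.zero_le m) h0
  have hiMem1 : i ∈ V i (m + 1) := hVmono i (Nat.le_succ m) hiMem
  -- main estimate for a fixed x
  have hmain : ∀ x ∈ Sxi ξ, alp φ W g ξ V i t (m + 1) - γ * ∑' j, D j ≤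
      rk φ W g ξ V i t m true x + rk φ W g ξ V i t m false x := by
    intro x hx
    obtain ⟨sx, hsx, hsxi⟩ := hξ i t
    have hxspike : ∃ s : ℤ, s < t ∧ x s i = true := ⟨sx, hsx, hx i sx hsxi⟩
    obtain ⟨hLt, hLx, hwx⟩ := lastSpike_spec x i t hxspike
    have hRleL : R ≤ lastSpike x i t := by
      rw [hRL]
      refine csSup_le_csSup ⟨t, fun s hs => hs.1.le⟩ ⟨sx, hsx, hsxi⟩ ?_
      rintro s ⟨h1, h2⟩
      exact ⟨h1, hx i s h2⟩
    refine le_of_forall_pos_le_add fun ε hε => ?_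
    obtain ⟨v1, hv1mem, hv1lt⟩ := exists_lt_of_csInf_lt (hne m true x hx)
      (lt_add_of_pos_right (rk φ W g ξ V i t m true x) (half_pos hε))
    obtain ⟨z1, hz1S, hz1a, rfl⟩ := hv1mem
    obtain ⟨v2, hv2mem, hv2lt⟩ := exists_lt_of_csInf_lt (hne m false x hx)
      (lt_add_of_pos_right (rk φ W g ξ V i t m false x) (half_pos hε))
    obtain ⟨z2, hz2S, hz2a, rfl⟩ := hv2mem
    set z3 : ℤ → I → Bool := fun s j => if j ∈ V i (m + 1) then z1 s j else z2 s j
      with hz3def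
    have hz3S : z3 ∈ Sxi ξ := by
      intro j s h
      rw [hz3def]
      dsimp only
      split_ifs
      · exact hz1S j s h
      · exact hz2S j s h
    -- structure at coordinate i
    have hz1L : z1 (lastSpike x i t) i = true := by
      rw [hz1a i hiMem (lastSpike x i t) le_rfl hLt]; exact hLx
    have hz1w : ∀ u : ℤ, lastSpike x i t < u → u < t → z1 u i = false := by
      intro u hu hut
      rw [hz1a i hiMem u hu.le hut]; exact hwx u hu hut
    have hz2L : z2 (lastSpike x i t) i = true := by
      rw [hz2a i hiMem (lastSpike x i t) le_rfl hLt]; exact hLx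
    have hz2w : ∀ u : ℤ, lastSpike x i t < u → u < t → z2 u i = false := by
      intro u hu hut
      rw [hz2a i hiMem u hu.le hut]; exact hwx u hu hut
    have hz3L : z3 (lastSpike x i t) i = true := by
      rw [hz3def]; dsimp only; rw [if_pos hiMem1]; exact hz1L
    have hz3w : ∀ u : ℤ, lastSpike x i t < u → u < t → z3 u i = false := by
      intro u hu hut
      rw [hz3def]; dsimp only; rw [if_pos hiMem1]; exact hz1w u hu hut
    have hLz1 : lastSpike z1 i t = lastSpike x i t :=
      lastSpike_eq_of z1 i t _ hLt hz1L hz1w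
    have hLz2 : lastSpike z2 i t = lastSpike x i t :=
      lastSpike_eq_of z2 i t _ hLt hz2L hz2w
    have hLz3 : lastSpike z3 i t = lastSpike x i t :=
      lastSpike_eq_of z3 i t _ hLt hz3L hz3w
    -- alp (m+1) bounds
    have halp : alp φ W g ξ V i t (m + 1) ≤
        rk φ W g ξ V i t (m + 1) true z1 + rk φ W g ξ V i t (m + 1) false z1 := by
      refine csInf_le ⟨0, ?_⟩ (Set.mem_image_of_mem _ hz1S)
      rintro v ⟨y, hy, rfl⟩
      exact add_nonneg (hrk_nonneg _ _ _) (hrk_nonneg _ _ _)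
    have h4 : rk φ W g ξ V i t (m + 1) true z1 ≤ spikeP φ W g i t z1 := by
      refine csInf_le (hbdd _ _ _) ⟨z1, hz1S, fun _ _ _ _ _ => rfl, ?_⟩
      simp [pcond]
    have h5 : rk φ W g ξ V i t (m + 1) false z1 ≤ 1 - spikeP φ W g i t z3 := by
      refine csInf_le (hbdd _ _ _) ⟨z3, hz3S, ?_, ?_⟩
      · intro j hj s _ _
        rw [hz3def]; dsimp only; rw [if_pos hj]
      · simp [pcond]
    -- potential difference bound
    have hpot : |pot W g i t z3 - pot W g i t z2| ≤
        ∑ j ∈ V i (m + 1) \ V i m, |W j i| *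
          ∑ s ∈ Finset.Icc (lastSpike x i t) (t - 1),
            g j (t - s).toNat * (if ξ s j then 0 else 1) := by
      refine pot_diff_le W g ξ i t (lastSpike x i t) C hgpos SummW
        (hsumC _ hRleL) z3 z2 hz3S hz2S hLt hz3L hz3w hz2L hz2w
        (V i (m + 1) \ V i m) ?_
      intro j hj s hs1 hs2
      simp only [Finset.mem_sdiff, not_and, not_not] at hj
      by_cases hjk : j ∈ V i (m + 1)
      · have hjm : j ∈ V i m := hj hjk
        rw [hz3def]; dsimp only
        rw [if_pos hjk, hz1a j hjm s hs1 hs2, hz2a j hjm s hs1 hs2]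
      · rw [hz3def]; dsimp only; rw [if_neg hjk]
    have hsum_le : (∑ j ∈ V i (m + 1) \ V i m, |W j i| *
          ∑ s ∈ Finset.Icc (lastSpike x i t) (t - 1),
            g j (t - s).toNat * (if ξ s j then 0 else 1)) ≤ ∑' j, D j := by
      refine le_trans (Finset.sum_le_sum fun j hj => ?_)
        (Summable.sum_le_tsum _ (fun j _ => hD0 j) SummD)
      simp only [Finset.mem_sdiff] at hj
      have hDj : D j = |W j i| * ∑ s ∈ Finset.Icc R (t - 1),
          g j (t - s).toNat * (if ξ s j then 0 else 1) := by
        rw [hDdef]; dsimp only; rw [if_neg hj.2]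
      rw [hDj]
      refine mul_le_mul_of_nonneg_left
        (Finset.sum_le_sum_of_subset_of_nonneg ?_ fun s _ _ => ?_) (abs_nonneg _)
      · intro s hs
        simp only [Finset.mem_Icc] at hs ⊢
        omega
      · by_cases hb : ξ s j = true
        · simp [hb]
        · simp [hb, hgpos j _]
    -- Lipschitz bound
    have hlip : spikeP φ W g i t z2 - spikeP φ W g i t z3 ≤ γ * ∑' j, D j := by
      have h1 : |spikeP φ W g i t z2 - spikeP φ W g i t z3| ≤
          γ * |pot W g i t z2 - pot W g i t z3| := by
        unfold spikeP
        rw [hLz2, hLz3]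
        exact hφLip i (pot W g i t z2) (pot W g i t z3) (t - lastSpike x i t).toNat
      have h2 := le_trans (le_abs_self _) h1
      have h3 : |pot W g i t z2 - pot W g i t z3| ≤ ∑' j, D j := by
        rw [abs_sub_comm]
        exact hpot.trans hsum_le
      nlinarith [mul_le_mul_of_nonneg_left h3 hγ.le]
    have hv1lt' : spikeP φ W g i t z1 < rk φ W g ξ V i t m true x + ε / 2 := by
      simpa [pcond] using hv1lt
    have hv2lt' : 1 - spikeP φ W g i t z2 < rk φ W g ξ V i t m false x + ε / 2 := by
      simpa [pcond] using hv2lt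
    linarith
  -- conclude
  have hle : alp φ W g ξ V i t (m + 1) - γ * ∑' j, D j ≤ alp φ W g ξ V i t m := by
    refine le_csInf ⟨_, Set.mem_image_of_mem _ hxiS⟩ ?_
    rintro v ⟨x, hx, rfl⟩
    exact hmain x hx
  constructor
  · simp only [lam]
    linarith
  · have hDt : (∑' j, D j) ≤
        (∑' j : I, (if j ∈ V i m then (0:ℝ) else |W j i|)) * C := by
      rw [← tsum_mul_right]
      exact Summable.tsum_le_tsum hDleC SummD (SummH.mul_right C)
    calc γ * ∑' j, D j ≤ γ * ((∑' j : I, (if j ∈ V i m then (0:ℝ) else |W j i|)) * C) :=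
          mul_le_mul_of_nonneg_left hDt hγ.le
      _ = γ * C * ∑' j : I, (if j ∈ V i m then (0:ℝ) else |W j i|) := by ring
end
end

section
/- Uniform approximation of the transition probability by finite-range minorants. Under the assumptions sup_i ∑_j |W_{j→i}| < ∞, uniform Lipschitz continuity of φ with constant γ, and G(n) < ∞ for all n, for every (i,t) with ξ_t(i) = 0, every N ≥ 0, every a ∈ {0,1} and every x ∈ S^ξ: |p_{(i,t)}(a|x) − r_{(i,t)}^{[N]}(a|x)| ≤ γ · (∑_{s=R_t^i}^{t−1} sup_j g_j(t−s)) · ∑_{j∉V_i(N)} |W_{j→i}|, which tends to 0 as N → ∞; consequently, for all a ∈ {0,1} and all x ∈ S^ξ, p_{(i,t)}(a|x) = r_{(i,t)}^{[−1]}(a) + ∑_{k=0}^∞ Δ_{(i,t)}^{[k]}(a|x), where Δ_{(i,t)}^{[k]}(a|x) = r_{(i,t)}^{[k]}(a|x) − r_{(i,t)}^{[k−1]}(a|x) (with r^{[−1]} as defined in the context). -/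
open MeasureTheory Filter Set
open scoped ENNReal

noncomputable section

open NeuronSys

lemma abs_tsum_le_tsum_abs' {ι : Type*} {f : ι → ℝ} (h : Summable fun i => |f i|) :
    |∑' i, f i| ≤ ∑' i, |f i| := by
  have h' : Summable fun i => ‖f i‖ := by simpa [Real.norm_eq_abs] using h
  simpa [Real.norm_eq_abs] using norm_tsum_le_tsum_norm h'

set_option maxHeartbeats 1600000 in
/-- **Uniform approximation of the transition probability by finite-range minorants.**
`|p_{(i,t)}(a|x) - r^{[N]}_{(i,t)}(a|x)| ≤ γ (∑_{s=R_t^i}^{t-1} sup_j g_j(t-s))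
 ∑_{j∉V_i(N)} |W_{j→i}|`, which tends to `0` as `N → ∞`; consequently
`p_{(i,t)}(a|x) = r^{[-1]}(a) + ∑_{k≥0} Δ^{[k]}(a|x)` with
`Δ^{[k]} = r^{[k]} - r^{[k-1]}`. -/
theorem finite_range_approximation
    {I : Type*} [Countable I] [Nonempty I] [DecidableEq I]
    (W : I → I → ℝ) (g : I → ℕ → ℝ) (V : I → ℕ → Finset I)
    (γ : ℝ) (φ : I → ℝ → ℕ → ℝ) (ξ : ℤ → I → Bool)
    (hWdiag : ∀ j, W j j = 0)
    (hgpos : ∀ j n, 0 ≤ g j n)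
    (hγ : 0 < γ)
    (hWsum : (⨆ i : I, ∑' j : I, ENNReal.ofReal |W j i|) < ⊤)
    (hV0 : ∀ i, V i 0 = {i})
    (hVmono : ∀ i, Monotone (V i))
    (hVunion : ∀ i, (⋃ k, (V i k : Set I)) = {j | j ≠ i ∧ W j i ≠ 0} ∪ {i})
    (hφrange : ∀ i s n, φ i s n ∈ Set.Icc (0:ℝ) 1)
    (hφLip : ∀ i s s' n, |φ i s n - φ i s' n| ≤ γ * |s - s'|)
    (hG : ∀ n, Gfun g n < ⊤)
    (hξ : ∀ (i : I) (t : ℤ), ∃ s : ℤ, s < t ∧ ξ s i = true)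
    (i : I) (t : ℤ) (hit : ξ t i = false) :
    (∀ (N : ℕ) (a : Bool), ∀ x ∈ Sxi ξ,
      |pcond φ W g i t a x - rk φ W g ξ V i t N a x|
        ≤ γ * (∑ s ∈ Finset.Icc (lastXi ξ i t) (t-1), ⨆ j : I, g j (t - s).toNat)
            * ∑' j : I, (if j ∈ V i N then 0 else |W j i|)) ∧
    Filter.Tendsto (fun N : ℕ =>
        γ * (∑ s ∈ Finset.Icc (lastXi ξ i t) (t-1), ⨆ j : I, g j (t - s).toNat)
          * ∑' j : I, (if j ∈ V i N then 0 else |W j i|))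
      Filter.atTop (nhds 0) ∧
    (∀ (a : Bool), ∀ x ∈ Sxi ξ,
      HasSum (fun k : ℕ => rk φ W g ξ V i t k a x -
          (if k = 0 then rneg φ W g ξ i t a else rk φ W g ξ V i t (k-1) a x))
        (pcond φ W g i t a x - rneg φ W g ξ i t a)) := by
  classical
  obtain ⟨s0, hs0t, hs0⟩ := hξ i t
  have hRmem : lastXi ξ i t ∈ {s : ℤ | s < t ∧ ξ s i = true} := by
    show sSup {s : ℤ | s < t ∧ ξ s i = true} ∈ {s : ℤ | s < t ∧ ξ s i = true}
    exact Int.csSup_mem ⟨s0, hs0t, hs0⟩ ⟨t, fun s hs => hs.1.le⟩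
  have hRt : lastXi ξ i t < t := hRmem.1
  have hRξ : ξ (lastXi ξ i t) i = true := hRmem.2
  have hLmem : ∀ x ∈ Sxi ξ, lastSpike x i t < t ∧ x (lastSpike x i t) i = true := by
    intro x hx
    show sSup {s : ℤ | s < t ∧ x s i = true} ∈ {s : ℤ | s < t ∧ x s i = true}
    exact Int.csSup_mem ⟨lastXi ξ i t, hRt, hx i _ hRξ⟩ ⟨t, fun s hs => hs.1.le⟩
  have hLub : ∀ (x : ℤ → I → Bool) (s : ℤ), s < t → x s i = true → s ≤ lastSpike x i t := by
    intro x s hs hxs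
    show s ≤ sSup {s : ℤ | s < t ∧ x s i = true}
    exact le_csSup ⟨t, fun u hu => hu.1.le⟩ ⟨hs, hxs⟩
  have hRL : ∀ x ∈ Sxi ξ, lastXi ξ i t ≤ lastSpike x i t :=
    fun x hx => hLub x _ hRt (hx i _ hRξ)
  set C : ℝ := ∑ s ∈ Finset.Icc (lastXi ξ i t) (t-1), ⨆ j : I, g j (t - s).toNat with hCdef
  -- boundedness of the sup of g
  have hbdd : ∀ n : ℕ, 1 ≤ n → BddAbove (Set.range fun j : I => g j n) := by
    intro n hn
    refine ⟨(Gfun g n).toReal, ?_⟩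
    rintro _ ⟨j, rfl⟩
    have h1 : ENNReal.ofReal (g j n) ≤ Gfun g n := by
      refine le_trans ?_ (le_iSup (fun j : I => ∑ m ∈ Finset.Icc 1 n, ENNReal.ofReal (g j m)) j)
      exact Finset.single_le_sum (f := fun m => ENNReal.ofReal (g j m))
        (fun m _ => zero_le) (Finset.mem_Icc.mpr ⟨hn, le_refl n⟩)
    have h2 := ENNReal.toReal_mono (hG n).ne h1
    rwa [ENNReal.toReal_ofReal (hgpos j n)] at h2
  have hsup_le : ∀ n : ℕ, 1 ≤ n → ∀ j : I, g j n ≤ ⨆ j' : I, g j' n :=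
    fun n hn j => le_ciSup (hbdd n hn) j
  have hsup0 : ∀ n : ℕ, 1 ≤ n → (0:ℝ) ≤ ⨆ j' : I, g j' n :=
    fun n hn => le_trans (hgpos (Classical.arbitrary I) n) (hsup_le n hn _)
  have hC0 : 0 ≤ C :=
    Finset.sum_nonneg fun s hs => hsup0 _ (by have := Finset.mem_Icc.mp hs; omega)
  -- summability of the weights
  have hfsum : Summable (fun j : I => |W j i|) := by
    have h1 : (∑' j : I, ENNReal.ofReal |W j i|) ≠ ⊤ :=
      ne_top_of_le_ne_top hWsum.ne
        (le_iSup (fun i : I => ∑' j : I, ENNReal.ofReal |W j i|) i)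
    have h2 := ENNReal.summable_toReal h1
    simpa [ENNReal.toReal_ofReal, abs_nonneg] using h2
  have htailsummable : ∀ N : ℕ, Summable (fun j : I => if j ∈ V i N then 0 else |W j i|) := by
    intro N
    refine Summable.of_nonneg_of_le (fun j => ?_) (fun j => ?_) hfsum
    · split <;> simp [abs_nonneg]
    · split <;> simp [abs_nonneg]
  have htail0 : ∀ N : ℕ, 0 ≤ ∑' j : I, (if j ∈ V i N then 0 else |W j i|) :=
    fun N => tsum_nonneg fun j => by split <;> simp [abs_nonneg]
  -- condition equivalence
  have hcond : ∀ x ∈ Sxi ξ, ∀ s : ℤ,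
      (s < t ∧ ∀ u : ℤ, s < u → u < t → x u i = false) ↔
      (lastSpike x i t ≤ s ∧ s ≤ t - 1) := by
    intro x hx s
    constructor
    · rintro ⟨hst, hno⟩
      refine ⟨?_, by omega⟩
      by_contra h
      push_neg at h
      have h2 := hno (lastSpike x i t) h (hLmem x hx).1
      rw [(hLmem x hx).2] at h2
      simp at h2
    · rintro ⟨h1, h2⟩
      refine ⟨by omega, fun u hu1 hu2 => ?_⟩
      cases hxu : x u i
      · rfl
      · exact absurd (hLub x u hu2 hxu) (by omega)
  -- the potential as a tsum of finite sums
  have potEq : ∀ x ∈ Sxi ξ, pot W g i t x =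
      ∑' j : I, ∑ s ∈ Finset.Icc (lastSpike x i t) (t-1),
        (if x s j = true then W j i * g j (t - s).toNat else 0) := by
    intro x hx
    unfold pot
    refine tsum_congr fun j => ?_
    have h0 : ∀ s ∉ Finset.Icc (lastSpike x i t) (t-1),
        (if s < t ∧ (∀ u : ℤ, s < u → u < t → x u i = false) ∧ x s j = true
          then W j i * g j (t - s).toNat else 0) = 0 := by
      intro s hs
      rw [if_neg]
      rintro ⟨h1, h2, _⟩
      exact hs (Finset.mem_Icc.mpr ((hcond x hx s).mp ⟨h1, h2⟩))
    rw [tsum_eq_sum h0]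
    refine Finset.sum_congr rfl fun s hs => ?_
    have hc := (hcond x hx s).mpr (Finset.mem_Icc.mp hs)
    by_cases hxs : x s j = true
    · rw [if_pos ⟨hc.1, hc.2, hxs⟩, if_pos hxs]
    · rw [if_neg (fun h => hxs h.2.2), if_neg hxs]
  -- bound on the g-sums
  have hgC : ∀ x ∈ Sxi ξ, ∀ j : I,
      ∑ s ∈ Finset.Icc (lastSpike x i t) (t-1), g j (t - s).toNat ≤ C := by
    intro x hx j
    calc ∑ s ∈ Finset.Icc (lastSpike x i t) (t-1), g j (t - s).toNat
        ≤ ∑ s ∈ Finset.Icc (lastSpike x i t) (t-1), ⨆ j' : I, g j' (t - s).toNat :=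
          Finset.sum_le_sum fun s hs =>
            hsup_le _ (by have := Finset.mem_Icc.mp hs; omega) j
      _ ≤ C := Finset.sum_le_sum_of_subset_of_nonneg
          (Finset.Icc_subset_Icc_left (hRL x hx))
          (fun s hs _ => hsup0 _ (by have := Finset.mem_Icc.mp hs; omega))
  -- elementary term bound
  have hterm : ∀ (b c : Bool) (w gn : ℝ), 0 ≤ gn →
      |(if b = true then w * gn else 0) - (if c = true then w * gn else 0)| ≤ |w| * gn := by
    intro b c w gn hgn
    have hnn : 0 ≤ |w| * gn := mul_nonneg (abs_nonneg w) hgn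
    cases b <;> cases c <;>
      simp [abs_mul, abs_of_nonneg hgn, hnn, le_refl]
  have hFabs : ∀ x ∈ Sxi ξ, ∀ j : I,
      |∑ s ∈ Finset.Icc (lastSpike x i t) (t-1),
        (if x s j = true then W j i * g j (t - s).toNat else 0)| ≤ |W j i| * C := by
    intro x hx j
    calc |∑ s ∈ Finset.Icc (lastSpike x i t) (t-1),
            (if x s j = true then W j i * g j (t - s).toNat else 0)|
        ≤ ∑ s ∈ Finset.Icc (lastSpike x i t) (t-1),
            |(if x s j = true then W j i * g j (t - s).toNat else 0)| :=
          Finset.abs_sum_le_sum_abs _ _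
      _ ≤ ∑ s ∈ Finset.Icc (lastSpike x i t) (t-1), |W j i| * g j (t - s).toNat := by
          refine Finset.sum_le_sum fun s hs => ?_
          have := hterm (x s j) false (W j i) (g j (t - s).toNat) (hgpos j _)
          simpa using this
      _ = |W j i| * ∑ s ∈ Finset.Icc (lastSpike x i t) (t-1), g j (t - s).toNat :=
          (Finset.mul_sum _ _ _).symm
      _ ≤ |W j i| * C := mul_le_mul_of_nonneg_left (hgC x hx j) (abs_nonneg _)
  have hFsummable : ∀ x ∈ Sxi ξ, Summable (fun j : I =>
      ∑ s ∈ Finset.Icc (lastSpike x i t) (t-1),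
        (if x s j = true then W j i * g j (t - s).toNat else 0)) := by
    intro x hx
    refine Summable.of_abs ?_
    exact Summable.of_nonneg_of_le (fun j => abs_nonneg _) (hFabs x hx) (hfsum.mul_right C)
  have hiV : ∀ N : ℕ, i ∈ V i N :=
    fun N => hVmono i (Nat.zero_le N) (by rw [hV0 i]; exact Finset.mem_singleton_self i)
  -- last spikes agree
  have hLz : ∀ (N : ℕ), ∀ x ∈ Sxi ξ, ∀ z : ℤ → I → Bool,
      (∀ j ∈ V i N, ∀ s : ℤ, lastSpike x i t ≤ s → s < t → z s j = x s j) →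
      lastSpike z i t = lastSpike x i t := by
    intro N x hx z hag
    show sSup {s : ℤ | s < t ∧ z s i = true} = lastSpike x i t
    refine IsGreatest.csSup_eq ⟨⟨(hLmem x hx).1, ?_⟩, ?_⟩
    · rw [hag i (hiV N) _ le_rfl (hLmem x hx).1]
      exact (hLmem x hx).2
    · rintro s ⟨hst, hzs⟩
      by_contra h
      push_neg at h
      have h2 := hag i (hiV N) s h.le hst
      have hxs : x s i = true := by rw [← h2]; exact hzs
      exact absurd (hLub x s hst hxs) (not_le.mpr h)
  -- potential difference bound
  have hpotdiff : ∀ (N : ℕ), ∀ x ∈ Sxi ξ, ∀ z ∈ Sxi ξ,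
      (∀ j ∈ V i N, ∀ s : ℤ, lastSpike x i t ≤ s → s < t → z s j = x s j) →
      |pot W g i t x - pot W g i t z| ≤
        C * ∑' j : I, (if j ∈ V i N then 0 else |W j i|) := by
    intro N x hx z hz hag
    have hL := hLz N x hx z hag
    have hsx := hFsummable x hx
    have hsz : Summable (fun j : I =>
        ∑ s ∈ Finset.Icc (lastSpike x i t) (t-1),
          (if z s j = true then W j i * g j (t - s).toNat else 0)) := by
      have := hFsummable z hz
      rwa [hL] at this
    have hzgC : ∀ j : I,
        ∑ s ∈ Finset.Icc (lastSpike x i t) (t-1), g j (t - s).toNat ≤ C := hgC x hx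
    rw [potEq x hx, potEq z hz, hL, ← Summable.tsum_sub hsx hsz]
    have hptbound : ∀ j : I,
        |(∑ s ∈ Finset.Icc (lastSpike x i t) (t-1),
            (if x s j = true then W j i * g j (t - s).toNat else 0)) -
         (∑ s ∈ Finset.Icc (lastSpike x i t) (t-1),
            (if z s j = true then W j i * g j (t - s).toNat else 0))| ≤
        (if j ∈ V i N then 0 else |W j i|) * C := by
      intro j
      by_cases hj : j ∈ V i N
      · have heq : (∑ s ∈ Finset.Icc (lastSpike x i t) (t-1),
            (if z s j = true then W j i * g j (t - s).toNat else 0)) =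
            ∑ s ∈ Finset.Icc (lastSpike x i t) (t-1),
            (if x s j = true then W j i * g j (t - s).toNat else 0) := by
          refine Finset.sum_congr rfl fun s hs => ?_
          have hs' := Finset.mem_Icc.mp hs
          rw [hag j hj s hs'.1 (by omega)]
        rw [heq, if_pos hj]
        simp
      · rw [if_neg hj, ← Finset.sum_sub_distrib]
        calc |∑ s ∈ Finset.Icc (lastSpike x i t) (t-1),
                ((if x s j = true then W j i * g j (t - s).toNat else 0) -
                 (if z s j = true then W j i * g j (t - s).toNat else 0))|
            ≤ ∑ s ∈ Finset.Icc (lastSpike x i t) (t-1),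
                |(if x s j = true then W j i * g j (t - s).toNat else 0) -
                 (if z s j = true then W j i * g j (t - s).toNat else 0)| :=
              Finset.abs_sum_le_sum_abs _ _
          _ ≤ ∑ s ∈ Finset.Icc (lastSpike x i t) (t-1), |W j i| * g j (t - s).toNat :=
              Finset.sum_le_sum fun s hs => hterm (x s j) (z s j) _ _ (hgpos j _)
          _ = |W j i| * ∑ s ∈ Finset.Icc (lastSpike x i t) (t-1), g j (t - s).toNat :=
              (Finset.mul_sum _ _ _).symm
          _ ≤ |W j i| * C := mul_le_mul_of_nonneg_left (hzgC j) (abs_nonneg _)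
    have habs_sum : Summable (fun j : I =>
        |(∑ s ∈ Finset.Icc (lastSpike x i t) (t-1),
            (if x s j = true then W j i * g j (t - s).toNat else 0)) -
         (∑ s ∈ Finset.Icc (lastSpike x i t) (t-1),
            (if z s j = true then W j i * g j (t - s).toNat else 0))|) :=
      Summable.of_nonneg_of_le (fun j => abs_nonneg _) hptbound
        ((htailsummable N).mul_right C)
    calc |∑' j : I,
            ((∑ s ∈ Finset.Icc (lastSpike x i t) (t-1),
              (if x s j = true then W j i * g j (t - s).toNat else 0)) -
             (∑ s ∈ Finset.Icc (lastSpike x i t) (t-1),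
              (if z s j = true then W j i * g j (t - s).toNat else 0)))|
        ≤ ∑' j : I,
            |(∑ s ∈ Finset.Icc (lastSpike x i t) (t-1),
              (if x s j = true then W j i * g j (t - s).toNat else 0)) -
             (∑ s ∈ Finset.Icc (lastSpike x i t) (t-1),
              (if z s j = true then W j i * g j (t - s).toNat else 0))| :=
          abs_tsum_le_tsum_abs' habs_sum
      _ ≤ ∑' j : I, (if j ∈ V i N then 0 else |W j i|) * C :=
          Summable.tsum_le_tsum hptbound habs_sum ((htailsummable N).mul_right C)
      _ = C * ∑' j : I, (if j ∈ V i N then 0 else |W j i|) := by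
          rw [tsum_mul_right]; ring
  -- pcond bounds
  have hpc01 : ∀ (a : Bool) (x : ℤ → I → Bool),
      0 ≤ pcond φ W g i t a x ∧ pcond φ W g i t a x ≤ 1 := by
    intro a x
    have h := hφrange i (pot W g i t x) (t - lastSpike x i t).toNat
    cases a
    · constructor <;> simp [pcond, spikeP] <;> linarith [h.1, h.2]
    · constructor <;> simp [pcond, spikeP] <;> linarith [h.1, h.2]
  -- Lipschitz bound on pcond
  have hpdiff : ∀ (N : ℕ) (a : Bool), ∀ x ∈ Sxi ξ, ∀ z ∈ Sxi ξ,
      (∀ j ∈ V i N, ∀ s : ℤ, lastSpike x i t ≤ s → s < t → z s j = x s j) →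
      |pcond φ W g i t a x - pcond φ W g i t a z| ≤
        γ * C * ∑' j : I, (if j ∈ V i N then 0 else |W j i|) := by
    intro N a x hx z hz hag
    have hL := hLz N x hx z hag
    have hpot := hpotdiff N x hx z hz hag
    have key : |spikeP φ W g i t x - spikeP φ W g i t z| ≤
        γ * C * ∑' j : I, (if j ∈ V i N then 0 else |W j i|) := by
      unfold spikeP
      rw [hL]
      calc |φ i (pot W g i t x) (t - lastSpike x i t).toNat -
              φ i (pot W g i t z) (t - lastSpike x i t).toNat|
          ≤ γ * |pot W g i t x - pot W g i t z| := hφLip i _ _ _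
        _ ≤ γ * (C * ∑' j : I, (if j ∈ V i N then 0 else |W j i|)) :=
            mul_le_mul_of_nonneg_left hpot hγ.le
        _ = γ * C * ∑' j : I, (if j ∈ V i N then 0 else |W j i|) := by ring
    cases a
    · have h2 : pcond φ W g i t false x - pcond φ W g i t false z =
          -(spikeP φ W g i t x - spikeP φ W g i t z) := by
        simp [pcond]
        try ring
      rw [h2, abs_neg]
      exact key
    · simpa [pcond] using key
  -- facts about the constrained infima
  have hmemx : ∀ (N : ℕ) (a : Bool), ∀ x ∈ Sxi ξ,
      pcond φ W g i t a x ∈ {v | ∃ z ∈ Sxi ξ,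
        (∀ j ∈ V i N, ∀ s : ℤ, lastSpike x i t ≤ s → s < t → z s j = x s j) ∧
        v = pcond φ W g i t a z} :=
    fun N a x hx => ⟨x, hx, fun j _ s _ _ => rfl, rfl⟩
  have hbddk : ∀ (N : ℕ) (a : Bool) (x : ℤ → I → Bool),
      BddBelow {v | ∃ z ∈ Sxi ξ,
        (∀ j ∈ V i N, ∀ s : ℤ, lastSpike x i t ≤ s → s < t → z s j = x s j) ∧
        v = pcond φ W g i t a z} := by
    intro N a x
    refine ⟨0, ?_⟩
    rintro v ⟨z, hz, -, rfl⟩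
    exact (hpc01 a z).1
  have hrk_le : ∀ (N : ℕ) (a : Bool), ∀ x ∈ Sxi ξ,
      rk φ W g ξ V i t N a x ≤ pcond φ W g i t a x :=
    fun N a x hx => csInf_le (hbddk N a x) (hmemx N a x hx)
  have hrk_ge : ∀ (N : ℕ) (a : Bool), ∀ x ∈ Sxi ξ,
      pcond φ W g i t a x - γ * C * ∑' j : I, (if j ∈ V i N then 0 else |W j i|) ≤
        rk φ W g ξ V i t N a x := by
    intro N a x hx
    refine le_csInf ⟨_, hmemx N a x hx⟩ ?_
    rintro v ⟨z, hz, hag, rfl⟩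
    have := le_of_abs_le (hpdiff N a x hx z hz hag)
    linarith
  have hB0 : ∀ N : ℕ, 0 ≤ γ * C * ∑' j : I, (if j ∈ V i N then 0 else |W j i|) :=
    fun N => mul_nonneg (mul_nonneg hγ.le hC0) (htail0 N)
  have habs : ∀ (N : ℕ) (a : Bool), ∀ x ∈ Sxi ξ,
      |pcond φ W g i t a x - rk φ W g ξ V i t N a x| ≤
        γ * C * ∑' j : I, (if j ∈ V i N then 0 else |W j i|) := by
    intro N a x hx
    have h1 := hrk_le N a x hx
    have h2 := hrk_ge N a x hx
    have h3 := hB0 N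
    rw [abs_le]
    constructor <;> linarith
  -- tendsto of the tail
  have hm : Filter.Tendsto (fun N : ℕ => ∑ j ∈ V i N, |W j i|)
      Filter.atTop (nhds (∑' j : I, |W j i|)) := by
    rw [Metric.tendsto_atTop]
    intro ε hε
    have h1 : ∀ᶠ T : Finset I in Filter.atTop,
        dist (∑ j ∈ T, |W j i|) (∑' j : I, |W j i|) < ε :=
      Metric.tendsto_nhds.mp hfsum.hasSum ε hε
    obtain ⟨T₀, hT₀⟩ := Filter.eventually_atTop.mp h1
    have hex : ∀ j ∈ T₀.filter (fun j => W j i ≠ 0), ∃ k : ℕ, j ∈ V i k := by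
      intro j hj
      rw [Finset.mem_filter] at hj
      have hji : j ≠ i := by
        rintro rfl
        exact hj.2 (hWdiag j)
      have hmem : j ∈ (⋃ k, (V i k : Set I)) := by
        rw [hVunion i]
        exact Or.inl ⟨hji, hj.2⟩
      simpa using hmem
    choose! k hk using hex
    refine ⟨(T₀.filter (fun j => W j i ≠ 0)).sup k, fun N hN => ?_⟩
    have hsub : ∀ j ∈ T₀.filter (fun j => W j i ≠ 0), j ∈ V i N := by
      intro j hj
      exact hVmono i (le_trans (Finset.le_sup hj) hN) (hk j hj)
    have hkey : ∑ j ∈ V i N ∪ T₀, |W j i| = ∑ j ∈ V i N, |W j i| := by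
      refine (Finset.sum_subset Finset.subset_union_left fun j hj hjn => ?_).symm
      have hjT : j ∈ T₀ := by
        rcases Finset.mem_union.mp hj with h | h
        · exact absurd h hjn
        · exact h
      by_contra hW0
      have hWne : W j i ≠ 0 := by
        intro h
        exact hW0 (by rw [h, abs_zero])
      exact hjn (hsub j (Finset.mem_filter.mpr ⟨hjT, hWne⟩))
    have h2 := hT₀ (V i N ∪ T₀) Finset.subset_union_right
    rwa [hkey] at h2
  have htail_tendsto : Filter.Tendsto
      (fun N : ℕ => ∑' j : I, (if j ∈ V i N then 0 else |W j i|))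
      Filter.atTop (nhds 0) := by
    have heq : ∀ N : ℕ, (∑' j : I, (if j ∈ V i N then 0 else |W j i|)) =
        (∑' j : I, |W j i|) - ∑ j ∈ V i N, |W j i| := by
      intro N
      have hind : Summable (fun j : I => if j ∈ V i N then |W j i| else 0) := by
        refine Summable.of_nonneg_of_le (fun j => ?_) (fun j => ?_) hfsum
        · split <;> simp [abs_nonneg]
        · split <;> simp [abs_nonneg]
      have h3 : (∑' j : I, (if j ∈ V i N then |W j i| else 0)) = ∑ j ∈ V i N, |W j i| := by
        rw [tsum_eq_sum (s := V i N) (fun j hj => if_neg hj)]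
        exact Finset.sum_congr rfl fun j hj => if_pos hj
      have h4 : ∀ j : I, (if j ∈ V i N then 0 else |W j i|) =
          |W j i| - (if j ∈ V i N then |W j i| else 0) := by
        intro j
        split <;> ring
      calc (∑' j : I, (if j ∈ V i N then 0 else |W j i|))
          = ∑' j : I, (|W j i| - (if j ∈ V i N then |W j i| else 0)) := tsum_congr h4
        _ = (∑' j : I, |W j i|) - ∑' j : I, (if j ∈ V i N then |W j i| else 0) :=
            Summable.tsum_sub hfsum hind
        _ = (∑' j : I, |W j i|) - ∑ j ∈ V i N, |W j i| := by rw [h3]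
    simp only [heq]
    have h5 := Filter.Tendsto.sub
      (tendsto_const_nhds (x := ∑' j : I, |W j i|) (f := Filter.atTop (α := ℕ))) hm
    simpa using h5
  have hBtendsto : Filter.Tendsto
      (fun N : ℕ => γ * C * ∑' j : I, (if j ∈ V i N then 0 else |W j i|))
      Filter.atTop (nhds 0) := by
    have := htail_tendsto.const_mul (γ * C)
    simpa using this
  refine ⟨fun N a x hx => habs N a x hx, hBtendsto, ?_⟩
  -- the telescoping series
  intro a x hx
  have hrmono : ∀ m : ℕ, rk φ W g ξ V i t m a x ≤ rk φ W g ξ V i t (m+1) a x := by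
    intro m
    refine csInf_le_csInf (hbddk m a x) ⟨_, hmemx (m+1) a x hx⟩ ?_
    rintro v ⟨z, hz, hag, rfl⟩
    exact ⟨z, hz, fun j hj s h1 h2 => hag j (hVmono i (Nat.le_succ m) hj) s h1 h2, rfl⟩
  have hrneg_bdd : BddBelow ((fun z => pcond φ W g i t a z) '' Sxi ξ) := by
    refine ⟨0, ?_⟩
    rintro v ⟨z, hz, rfl⟩
    exact (hpc01 a z).1
  have hrneg_le : rneg φ W g ξ i t a ≤ rk φ W g ξ V i t 0 a x := by
    refine csInf_le_csInf hrneg_bdd ⟨_, hmemx 0 a x hx⟩ ?_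
    rintro v ⟨z, hz, hag, rfl⟩
    exact ⟨z, hz, rfl⟩
  have hrneg_le_p : rneg φ W g ξ i t a ≤ pcond φ W g i t a x :=
    csInf_le hrneg_bdd ⟨x, hx, rfl⟩
  have hrtendsto : Filter.Tendsto (fun N : ℕ => rk φ W g ξ V i t N a x)
      Filter.atTop (nhds (pcond φ W g i t a x)) := by
    have h1 : ∀ N : ℕ, ‖rk φ W g ξ V i t N a x - pcond φ W g i t a x‖ ≤
        γ * C * ∑' j : I, (if j ∈ V i N then 0 else |W j i|) := by
      intro N
      rw [Real.norm_eq_abs, abs_sub_comm]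
      exact habs N a x hx
    have h0 := squeeze_zero_norm h1 hBtendsto
    have h2 := h0.add_const (pcond φ W g i t a x)
    simpa using h2
  set Δ : ℕ → ℝ := fun m => rk φ W g ξ V i t m a x -
      (if m = 0 then rneg φ W g ξ i t a else rk φ W g ξ V i t (m-1) a x) with hΔ
  have hΔ0 : ∀ m : ℕ, 0 ≤ Δ m := by
    intro m
    cases m with
    | zero => simpa [hΔ] using sub_nonneg.mpr hrneg_le
    | succ n => simpa [hΔ] using sub_nonneg.mpr (hrmono n)
  have hpartial : ∀ n : ℕ, ∑ m ∈ Finset.range (n+1), Δ m =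
      rk φ W g ξ V i t n a x - rneg φ W g ξ i t a := by
    intro n
    induction n with
    | zero => simp [hΔ]
    | succ m ih =>
      rw [Finset.sum_range_succ, ih]
      have hs : Δ (m+1) = rk φ W g ξ V i t (m+1) a x - rk φ W g ξ V i t m a x := by
        simp [hΔ]
      rw [hs]
      ring
  have hΔsummable : Summable Δ := by
    refine summable_of_sum_range_le (c := pcond φ W g i t a x - rneg φ W g ξ i t a) hΔ0 fun n => ?_
    cases n with
    | zero => simpa using sub_nonneg.mpr hrneg_le_p
    | succ m =>
      rw [hpartial m]
      have := hrk_le m a x hx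
      linarith
  have hps1 : Filter.Tendsto (fun n : ℕ => ∑ m ∈ Finset.range (n+1), Δ m)
      Filter.atTop (nhds (∑' m, Δ m)) :=
    hΔsummable.hasSum.tendsto_sum_nat.comp (tendsto_add_atTop_nat 1)
  have hps2 : Filter.Tendsto (fun n : ℕ => ∑ m ∈ Finset.range (n+1), Δ m)
      Filter.atTop (nhds (pcond φ W g i t a x - rneg φ W g ξ i t a)) := by
    simp only [hpartial]
    exact hrtendsto.sub_const _
  have heq := tendsto_nhds_unique hps1 hps2
  exact heq ▸ hΔsummable.hasSum
end
end
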